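/- arXiv:2003.11298 — 2 statements merged into one kernel-verified Lean document; each statement's English description precedes it below -/
import Mathlib

section
/- In the Section 7 setting with n even, let γ_i denote the signed weight of the oriented base edge e_i, let B' be the signed GKM structure on the underlying graph of B in which e_{2i+1} carries weight γ_{2i+1} and e_{2i} carries weight −γ_{2i}, and let Γ' be the signed structure obtained from Γ by changing the signs of the labels of f_{2i} and h_{2i} for i = 1,…,n/2. Then Γ' → B' is a signed GKM fibration, and if Γ → B corresponds to (k_1,…,k_n) under the classification of signed fibrations, then Γ' → B' corresponds to (−k_1, k_2, …, −k_{n−1}, k_n). In particular, since Γ has the maximal number n−1 of interior vertices, Γ' has exactly one interior vertex. -/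
open Classical

namespace GKMPaper

/-- `ℤ^m`, the weight lattice. -/
abbrev Zm (m : ℕ) := Fin m → ℤ

/-- The relation identifying a vector with its negative. -/
def pmRel (m : ℕ) (a b : Zm m) : Prop := a = b ∨ a = -b

theorem pmRel_equiv (m : ℕ) : Equivalence (pmRel m) := by
  constructor
  · intro a; exact Or.inl rfl
  · intro a b hab
    rcases hab with hh | hh
    · exact Or.inl hh.symm
    · exact Or.inr (by rw [hh, neg_neg])
  · intro a b c h1 h2
    rcases h1 with h1 | h1 <;> rcases h2 with h2 | h2
    · exact Or.inl (h1.trans h2)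
    · exact Or.inr (h1.trans h2)
    · exact Or.inr (by rw [h1, h2])
    · exact Or.inl (by rw [h1, h2, neg_neg])

def pmSetoid (m : ℕ) : Setoid (Zm m) := ⟨pmRel m, pmRel_equiv m⟩

/-- `ℤ^m / ±1`. -/
def ZmPM (m : ℕ) := Quotient (pmSetoid m)

/-- The projection `ℤ^m → ℤ^m/±1`. -/
def pm {m : ℕ} (a : Zm m) : ZmPM m := Quotient.mk (pmSetoid m) a

/-- Linear independence over `ℤ`. -/
def Indep {m : ℕ} (a b : Zm m) : Prop :=
  ∀ c d : ℤ, c • a + d • b = 0 → c = 0 ∧ d = 0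

/-- An abstract graph with finite vertex and edge sets, each edge occurring with
both orientations, and no loops. -/
structure OrGraph : Type 1 where
  V : Type
  E : Type
  fV : Fintype V
  fE : Fintype E
  dV : DecidableEq V
  dE : DecidableEq E
  src : E → V
  dst : E → V
  rev : E → E
  rev_rev : ∀ e, rev (rev e) = e
  rev_ne : ∀ e, rev e ≠ e
  src_rev : ∀ e, src (rev e) = dst e
  no_loop : ∀ e, src e ≠ dst e

attribute [instance] OrGraph.fV OrGraph.fE OrGraph.dV OrGraph.dE

/-- A connection on a graph. -/
structure Connection (G : OrGraph) where
  t : G.E → G.E → G.E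
  src_t : ∀ e f, G.src f = G.src e → G.src (t e f) = G.dst e
  t_self : ∀ e, t e e = G.rev e
  t_inv : ∀ e f, G.src f = G.src e → t (G.rev e) (t e f) = f

/-- `k`-valence. -/
def OrGraph.Regular (G : OrGraph) (k : ℕ) : Prop :=
  ∀ v : G.V, Fintype.card {e : G.E // G.src e = v} = k

def OrGraph.Adj (G : OrGraph) (v w : G.V) : Prop :=
  ∃ e, G.src e = v ∧ G.dst e = w

def OrGraph.IsConn (G : OrGraph) : Prop :=
  ∀ v w : G.V, Relation.ReflTransGen G.Adj v w

/-- Compatibility of a connection with an unsigned axial function. -/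
def UnsignedCompat {m : ℕ} (G : OrGraph) (α : G.E → ZmPM m) (C : Connection G) : Prop :=
  (∀ e f : G.E, G.src f = G.src e → e ≠ f →
      ∀ a b : Zm m, pm a = α e → pm b = α f → Indep a b) ∧
  (∀ e f : G.E, G.src f = G.src e →
      ∃ (a g : Zm m) (c : ℤ), pm a = α f ∧ pm g = α e ∧ α (C.t e f) = pm (a + c • g)) ∧
  (∀ e : G.E, α (G.rev e) = α e)

/-- `(G, α)` is an (unsigned) abstract GKM graph of valence `k` with labels in `ℤ^m/±1`. -/
def IsGKM {m : ℕ} (G : OrGraph) (k : ℕ) (α : G.E → ZmPM m) : Prop :=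
  G.Regular k ∧ G.IsConn ∧ ∃ C : Connection G, UnsignedCompat G α C

/-- Compatibility of a connection with a signed axial function. -/
def SignedCompat {m : ℕ} (G : OrGraph) (α : G.E → Zm m) (C : Connection G) : Prop :=
  (∀ e f : G.E, G.src f = G.src e → e ≠ f → Indep (α e) (α f)) ∧
  (∀ e f : G.E, G.src f = G.src e → ∃ c : ℤ, α (C.t e f) = α f + c • α e) ∧
  (∀ e : G.E, α (G.rev e) = - α e)

/-- `(G, α)` is a signed abstract GKM graph of valence `k` with labels in `ℤ^m`. -/
def IsSignedGKM {m : ℕ} (G : OrGraph) (k : ℕ) (α : G.E → Zm m) : Prop :=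
  G.Regular k ∧ G.IsConn ∧ ∃ C : Connection G, SignedCompat G α C

/-- Effectivity of an unsigned GKM graph: at every vertex, the labels of the
outgoing edges lift to a generating set of `ℤ^m`. -/
def Effective {m : ℕ} (G : OrGraph) (α : G.E → ZmPM m) : Prop :=
  ∀ v : G.V, ∃ lift : {e : G.E // G.src e = v} → Zm m,
    (∀ e, pm (lift e) = α e.1) ∧ Submodule.span ℤ (Set.range lift) = ⊤

def SignedEffective {m : ℕ} (G : OrGraph) (α : G.E → Zm m) : Prop :=
  ∀ v : G.V,
    Submodule.span ℤ (Set.range (fun e : {e : G.E // G.src e = v} => α e.1)) = ⊤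

/-- A graph fibration: a morphism sending vertices to vertices and horizontal
edges to edges, bijectively from the horizontal edges at `p` to the edges at `π(p)`. -/
structure GraphFib (G B : OrGraph) where
  onV : G.V → B.V
  onE : G.E → B.E
  src_onE : ∀ e, onV (G.src e) ≠ onV (G.dst e) → B.src (onE e) = onV (G.src e)
  dst_onE : ∀ e, onV (G.src e) ≠ onV (G.dst e) → B.dst (onE e) = onV (G.dst e)
  rev_onE : ∀ e, onV (G.src e) ≠ onV (G.dst e) → onE (G.rev e) = B.rev (onE e)

def GraphFib.Vertical {G B : OrGraph} (π : GraphFib G B) (e : G.E) : Prop :=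
  π.onV (G.src e) = π.onV (G.dst e)

def GraphFib.IsFib {G B : OrGraph} (π : GraphFib G B) : Prop :=
  ∀ p : G.V, Function.Bijective
    (fun e : {e : G.E // G.src e = p ∧ ¬ π.Vertical e} =>
      (⟨π.onE e.1, by rw [π.src_onE e.1 e.2.2, e.2.1]⟩ : {f : B.E // B.src f = π.onV p}))

/-- The extra conditions for a (unsigned) GKM fibration, w.r.t. connections `C`, `CB`. -/
def GKMFibCompat {m : ℕ} {G B : OrGraph} (αΓ : G.E → ZmPM m) (αB : B.E → ZmPM m)
    (π : GraphFib G B) (C : Connection G) (CB : Connection B) : Prop :=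
  (∀ e, ¬ π.Vertical e → αΓ e = αB (π.onE e)) ∧
  (∀ e f, G.src f = G.src e → π.Vertical f → π.Vertical (C.t e f)) ∧
  (∀ e f, G.src f = G.src e → ¬ π.Vertical e → ¬ π.Vertical f →
      ¬ π.Vertical (C.t e f) ∧ π.onE (C.t e f) = CB.t (π.onE e) (π.onE f))

/-- `π` is a GKM fibration of unsigned GKM graphs. -/
def IsGKMFib {m : ℕ} {G B : OrGraph} (αΓ : G.E → ZmPM m) (αB : B.E → ZmPM m)
    (π : GraphFib G B) : Prop :=
  π.IsFib ∧ ∃ (C : Connection G) (CB : Connection B),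
    UnsignedCompat G αΓ C ∧ UnsignedCompat B αB CB ∧ GKMFibCompat αΓ αB π C CB

def SignedGKMFibCompat {m : ℕ} {G B : OrGraph} (sΓ : G.E → Zm m) (sB : B.E → Zm m)
    (π : GraphFib G B) (C : Connection G) (CB : Connection B) : Prop :=
  (∀ e, ¬ π.Vertical e → sΓ e = sB (π.onE e)) ∧
  (∀ e f, G.src f = G.src e → π.Vertical f → π.Vertical (C.t e f)) ∧
  (∀ e f, G.src f = G.src e → ¬ π.Vertical e → ¬ π.Vertical f →
      ¬ π.Vertical (C.t e f) ∧ π.onE (C.t e f) = CB.t (π.onE e) (π.onE f))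

/-- `π` is a signed GKM fibration of signed GKM graphs. -/
def IsSignedGKMFib {m : ℕ} {G B : OrGraph} (sΓ : G.E → Zm m) (sB : B.E → Zm m)
    (π : GraphFib G B) : Prop :=
  π.IsFib ∧ ∃ (C : Connection G) (CB : Connection B),
    SignedCompat G sΓ C ∧ SignedCompat B sB CB ∧ SignedGKMFibCompat sΓ sB π C CB

/-- `(π, ft)` is a fiberwise signed fibration: `ft` is a lift of `αΓ` on the
vertical edges, satisfying the congruence condition w.r.t. suitable connections. -/
def IsFiberwiseSigned {m : ℕ} {G B : OrGraph} (αΓ : G.E → ZmPM m) (αB : B.E → ZmPM m)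
    (π : GraphFib G B) (ft : G.E → Zm m) : Prop :=
  π.IsFib ∧
  (∀ e, π.Vertical e → pm (ft e) = αΓ e) ∧
  (∀ e, π.Vertical e → ft (G.rev e) = - ft e) ∧
  ∃ (C : Connection G) (CB : Connection B),
    UnsignedCompat G αΓ C ∧ UnsignedCompat B αB CB ∧ GKMFibCompat αΓ αB π C CB ∧
    ∀ e f, G.src f = G.src e → π.Vertical f →
      ∃ (g : Zm m) (c : ℤ), pm g = αΓ e ∧ ft (C.t e f) = ft f + c • g

/-- Isomorphism of unsigned GKM graphs. -/
structure GKMIso {m : ℕ} (G : OrGraph) (α : G.E → ZmPM m)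
    (G' : OrGraph) (α' : G'.E → ZmPM m) : Type where
  fV : G.V ≃ G'.V
  fE : G.E ≃ G'.E
  φ : Zm m ≃ₗ[ℤ] Zm m
  src_comm : ∀ e, G'.src (fE e) = fV (G.src e)
  dst_comm : ∀ e, G'.dst (fE e) = fV (G.dst e)
  rev_comm : ∀ e, fE (G.rev e) = G'.rev (fE e)
  lab : ∀ (e : G.E) (a : Zm m), pm a = α e → α' (fE e) = pm (φ a)

/-- Isomorphism of signed GKM graphs. -/
structure SignedGKMIso {m : ℕ} (G : OrGraph) (α : G.E → Zm m)
    (G' : OrGraph) (α' : G'.E → Zm m) : Type where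
  fV : G.V ≃ G'.V
  fE : G.E ≃ G'.E
  φ : Zm m ≃ₗ[ℤ] Zm m
  src_comm : ∀ e, G'.src (fE e) = fV (G.src e)
  dst_comm : ∀ e, G'.dst (fE e) = fV (G.dst e)
  rev_comm : ∀ e, fE (G.rev e) = G'.rev (fE e)
  lab : ∀ e, α' (fE e) = φ (α e)

/-- Equivalence of fiberwise signed fibrations over the same base (identity on `ℤ^m`). -/
structure FSFEquiv {m : ℕ} {G B G' : OrGraph}
    (αΓ : G.E → ZmPM m) (π : GraphFib G B) (ft : G.E → Zm m)
    (αΓ' : G'.E → ZmPM m) (π' : GraphFib G' B) (ft' : G'.E → Zm m) : Type where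
  fV : G.V ≃ G'.V
  fE : G.E ≃ G'.E
  src_comm : ∀ e, G'.src (fE e) = fV (G.src e)
  dst_comm : ∀ e, G'.dst (fE e) = fV (G.dst e)
  rev_comm : ∀ e, fE (G.rev e) = G'.rev (fE e)
  lab : ∀ e, αΓ' (fE e) = αΓ e
  baseV : ∀ p, π'.onV (fV p) = π.onV p
  baseE : ∀ e, ¬ π.Vertical e → π'.onE (fE e) = π.onE e
  fiblab : ∀ e, π.Vertical e → ft' (fE e) = ft e

/-- Equivalence of signed GKM fibrations over the same base (identity on `ℤ^m`). -/
structure SFEquiv {m : ℕ} {G B G' : OrGraph}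
    (sΓ : G.E → Zm m) (π : GraphFib G B)
    (sΓ' : G'.E → Zm m) (π' : GraphFib G' B) : Type where
  fV : G.V ≃ G'.V
  fE : G.E ≃ G'.E
  src_comm : ∀ e, G'.src (fE e) = fV (G.src e)
  dst_comm : ∀ e, G'.dst (fE e) = fV (G.dst e)
  rev_comm : ∀ e, fE (G.rev e) = G'.rev (fE e)
  lab : ∀ e, sΓ' (fE e) = sΓ e
  baseV : ∀ p, π'.onV (fV p) = π.onV p
  baseE : ∀ e, ¬ π.Vertical e → π'.onE (fE e) = π.onE e

/-- Realizing `ℤ²` inside `ℝ² = ℂ`. -/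
noncomputable def toC (a : Zm 2) : ℂ := (a 0 : ℝ) + (a 1 : ℝ) * Complex.I

def cross (a b : ℂ) : ℝ := a.re * b.im - a.im * b.re

/-- A vertex of a signed GKM graph with labels in `ℤ²` is interior if the cone
spanned by the labels of the edges emanating from it is all of `ℝ²`. -/
def InteriorVtx (G : OrGraph) (α : G.E → Zm 2) (p : G.V) : Prop :=
  ∀ x : ℂ, ∃ c : G.E → ℝ, (∀ e, 0 ≤ c e) ∧
    x = ∑ e ∈ Finset.univ.filter (fun e : G.E => G.src e = p), c e • toC (α e)

/-- The angle from `w` to `w'`, represented in `[0, 2π)` if `ε = true`,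
and in `(-2π, 0]` if `ε = false`. -/
noncomputable def angTo (ε : Bool) (w w' : ℂ) : ℝ :=
  if ε then (if (w' / w).arg < 0 then (w' / w).arg + 2 * Real.pi else (w' / w).arg)
  else (if 0 < (w' / w).arg then (w' / w).arg - 2 * Real.pi else (w' / w).arg)

/-- The winding number of a cyclic sequence of vectors w.r.t. the orientation `ε`. -/
noncomputable def winding {nn : ℕ} [NeZero nn] (w : ZMod nn → ℂ) (ε : Bool) : ℝ :=
  (1 / (2 * Real.pi)) * ∑ i : ZMod nn, |angTo ε (w i) (w (i + 1))|

def LocallyConvex {nn : ℕ} (w : ZMod nn → ℂ) : Prop :=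
  (∀ i, angTo true (w i) (w (i + 1)) ∈ Set.Ioo 0 Real.pi) ∨
  (∀ i, angTo false (w i) (w (i + 1)) ∈ Set.Ioo (-Real.pi) 0)

/-- `ε` is the preferred orientation of the locally convex sequence `w`. -/
def Preferred {nn : ℕ} (w : ZMod nn → ℂ) (ε : Bool) : Prop :=
  (ε = true ∧ ∀ i, angTo true (w i) (w (i + 1)) ∈ Set.Ioo 0 Real.pi) ∨
  (ε = false ∧ ∀ i, angTo false (w i) (w (i + 1)) ∈ Set.Ioo (-Real.pi) 0)

/-- `P` lists the vertices of a strictly convex polygon in cyclic order. -/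
def ConvexCyclic {nn : ℕ} (P : ZMod nn → ℂ) : Prop :=
  (∀ i j, j ≠ i → j ≠ i + 1 → 0 < cross (P (i + 1) - P i) (P j - P i)) ∨
  (∀ i j, j ≠ i → j ≠ i + 1 → cross (P (i + 1) - P i) (P j - P i) < 0)

def SubAdj (G : OrGraph) (S : Set G.E) (v w : G.V) : Prop :=
  ∃ e ∈ S, G.src e = v ∧ G.dst e = w

/-- `S` is (the edge set of) a connected `2`-valent signed GKM subgraph of `(G, α)`. -/
def IsSigned2ValentSub (G : OrGraph) (α : G.E → Zm 2) (S : Set G.E) : Prop :=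
  S.Nonempty ∧
  (∀ e ∈ S, G.rev e ∈ S) ∧
  (∀ v : G.V, (∃ e ∈ S, G.src e = v) → Nat.card {e : G.E // e ∈ S ∧ G.src e = v} = 2) ∧
  (∀ v w : G.V, (∃ e ∈ S, G.src e = v) → (∃ e ∈ S, G.src e = w) →
      Relation.ReflTransGen (SubAdj G S) v w) ∧
  ∃ T : G.E → G.E → G.E,
    (∀ e f, e ∈ S → f ∈ S → G.src f = G.src e → T e f ∈ S ∧ G.src (T e f) = G.dst e) ∧
    (∀ e, e ∈ S → T e e = G.rev e) ∧
    (∀ e f, e ∈ S → f ∈ S → G.src f = G.src e → T (G.rev e) (T e f) = f) ∧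
    (∀ e f, e ∈ S → f ∈ S → G.src f = G.src e → ∃ c : ℤ, α (T e f) = α f + c • α e)

/-- A `2`-valent signed GKM subgraph of polytope type: it is a cycle realized by the
boundary edges of a simple convex `2`-polytope, with labels representing the slopes. -/
def IsPolytopeTypeSub (G : OrGraph) (α : G.E → Zm 2) (S : Set G.E) : Prop :=
  IsSigned2ValentSub G α S ∧
  ∃ np : ℕ, 3 ≤ np ∧
    ∃ (cyc : ZMod np → G.E) (P : ZMod np → ℂ) (t : ZMod np → ℝ),
      (∀ i, cyc i ∈ S) ∧
      (∀ ed ∈ S, ∃ i, ed = cyc i ∨ ed = G.rev (cyc i)) ∧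
      (∀ i, G.dst (cyc i) = G.src (cyc (i + 1))) ∧
      ConvexCyclic P ∧
      (∀ i, 0 < t i) ∧
      (∀ i, P (i + 1) - P i = t i • toC (α (cyc i)))

/-- A fibration over an `n`-gon base is of product type if the lifts of a path
once around the base are closed. -/
def ProductType {G B : OrGraph} (π : GraphFib G B) {nn : ℕ} (eB : ZMod nn → B.E) : Prop :=
  ∃ l : ZMod nn → G.E,
    ∀ i, ¬ π.Vertical (l i) ∧ π.onE (l i) = eB i ∧ G.dst (l i) = G.src (l (i + 1))

/-- `ℤ`-indexed `n`-gon data for a `2`-valent base graph. -/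
structure ZGonData (B : OrGraph) (n : ℕ) where
  v : ℤ → B.V
  eB : ℤ → B.E
  v_per : ∀ i, v (i + n) = v i
  e_per : ∀ i, eB (i + n) = eB i
  src_e : ∀ i, B.src (eB i) = v i
  dst_e : ∀ i, B.dst (eB i) = v (i + 1)
  v_inj : ∀ i j : ℤ, 0 ≤ i → i < n → 0 ≤ j → j < n → v i = v j → i = j
  v_surj : ∀ w : B.V, ∃ i : ℤ, v i = w
  e_cover : ∀ ed : B.E, ∃ i : ℤ, ed = eB i ∨ ed = B.rev (eB i)

/-- A choice of sign representatives `γ_i` of the base labels with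
`γ_i ≡ -γ_{i+2} (mod γ_{i+1})` for all `i ∈ ℤ`. -/
structure GammaData {B : OrGraph} {n : ℕ} (αB : B.E → ZmPM 2) (D : ZGonData B n) where
  γ : ℤ → Zm 2
  lift : ∀ i, pm (γ i) = αB (D.eB i)
  cong : ∀ i, ∃ c : ℤ, γ i + γ (i + 2) = c • γ (i + 1)

/-- A fiberwise signed `3`-valent GKM fibration over `(B, αB)`. -/
structure FSFOver (B : OrGraph) (αB : B.E → ZmPM 2) : Type 1 where
  G : OrGraph
  αΓ : G.E → ZmPM 2
  hΓ : IsGKM G 3 αΓ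
  π : GraphFib G B
  ft : G.E → Zm 2
  isfs : IsFiberwiseSigned αΓ αB π ft

def FSFOver.Equiv {B : OrGraph} {αB : B.E → ZmPM 2} (F F' : FSFOver B αB) : Prop :=
  Nonempty (FSFEquiv F.αΓ F.π F.ft F'.αΓ F'.π F'.ft)

/-- A signed `3`-valent GKM fibration over the signed graph `(B, sB)`. -/
structure SFOver (B : OrGraph) (sB : B.E → Zm 2) : Type 1 where
  G : OrGraph
  sΓ : G.E → Zm 2
  hΓ : IsSignedGKM G 3 sΓ
  π : GraphFib G B
  issf : IsSignedGKMFib sΓ sB π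

def SFOver.Equiv {B : OrGraph} {sB : B.E → Zm 2} (F F' : SFOver B sB) : Prop :=
  Nonempty (SFEquiv F.sΓ F.π F'.sΓ F'.π)

/-- The fibration `F` realizes the classification datum `([k], η)` w.r.t. the fixed data. -/
def RealizesFS {B : OrGraph} {αB : B.E → ZmPM 2} {n : ℕ} (D : ZGonData B n)
    (Γd : GammaData αB D) (F : FSFOver B αB) (k : ZMod n → ℤ) (η : Bool) : Prop :=
  (η = false ↔ ProductType F.π (fun i : ZMod n => D.eB i.val)) ∧
  ∃ (gE : ℤ → F.G.E) (αf : ℤ → Zm 2) (kk : ℤ → ℤ),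
    (∀ i, F.π.Vertical (gE i)) ∧
    (∀ i, F.π.onV (F.G.src (gE i)) = D.v i) ∧
    (∀ i, gE (i + n) = gE i ∨ gE (i + n) = F.G.rev (gE i)) ∧
    (∀ i, pm (αf i) = F.αΓ (gE i)) ∧
    (∀ i, ∃ c : ℤ, αf (i + 1) = αf i + c • Γd.γ i) ∧
    (∀ i, αf i = kk i • Γd.γ (i - 1) - kk (i - 1) • Γd.γ i) ∧
    (∀ i, kk i ≠ 0) ∧
    (∀ i : ZMod n, k i = kk i.val)

/-- The signed fibration `F` realizes the classification datum `([k], η)`. -/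
def RealizesS {B : OrGraph} (sB : B.E → Zm 2) {αB : B.E → ZmPM 2} {n : ℕ}
    (D : ZGonData B n) (Γd : GammaData αB D) (F : SFOver B sB)
    (k : ZMod n → ℤ) (η : Bool) : Prop :=
  (η = false ↔ ProductType F.π (fun i : ZMod n => D.eB i.val)) ∧
  ∃ (gE : ℤ → F.G.E) (αf : ℤ → Zm 2) (kk : ℤ → ℤ),
    (∀ i, F.π.Vertical (gE i)) ∧
    (∀ i, F.π.onV (F.G.src (gE i)) = D.v i) ∧
    (∀ i, gE (i + n) = gE i ∨ gE (i + n) = F.G.rev (gE i)) ∧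
    (∀ i, pm (αf i) = pm (F.sΓ (gE i))) ∧
    (∀ i, ∃ c : ℤ, αf (i + 1) = αf i + c • Γd.γ i) ∧
    (∀ i, αf i = kk i • Γd.γ (i - 1) - kk (i - 1) • Γd.γ i) ∧
    (∀ i, kk i ≠ 0) ∧
    (∀ i : ZMod n, k i = kk i.val)

def KRel (n : ℕ) (a b : {k : ZMod n → ℤ // ∀ i, k i ≠ 0}) : Prop :=
  a.1 = b.1 ∨ a.1 = - b.1

/-- `((ℤ∖{0})^n)/±1`. -/
def KClass (n : ℕ) := Quot (KRel n)

/-- The Section 7 setting: a signed GKM fibration of twisted type of a `3`-valent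
signed GKM graph `Γ` over `B`, the boundary of a 2-dimensional Delzant polytope with
`n` vertices, with `Γ` having `n-1` interior vertices; with the basic edges `f i`, `h i`
over `e i` and the fiber edges `g i`. -/
structure Section7 : Type 1 where
  n : ℕ
  hn : 3 ≤ n
  G : OrGraph
  B : OrGraph
  aG : G.E → Zm 2
  aB : B.E → Zm 2
  hG : IsSignedGKM G 3 aG
  hB : IsSignedGKM B 2 aB
  π : GraphFib G B
  hfib : IsSignedGKMFib aG aB π
  v : ZMod n → B.V
  e : ZMod n → B.E
  v_bij : Function.Bijective v
  src_e : ∀ i, B.src (e i) = v i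
  dst_e : ∀ i, B.dst (e i) = v (i + 1)
  e_cover : ∀ ed : B.E, ∃ i, ed = e i ∨ ed = B.rev (e i)
  P : ZMod n → ℂ
  tl : ZMod n → ℝ
  tl_pos : ∀ i, 0 < tl i
  polygon : ConvexCyclic P
  slope : ∀ i, P (i + 1) - P i = tl i • toC (aB (e i))
  delzant : ∀ i, (aB (e (i - 1)) 0) * (aB (e i) 1) - (aB (e (i - 1)) 1) * (aB (e i) 0) = 1 ∨
                 (aB (e (i - 1)) 0) * (aB (e i) 1) - (aB (e (i - 1)) 1) * (aB (e i) 0) = -1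
  f : ZMod n → G.E
  h : ZMod n → G.E
  g : ZMod n → G.E
  f_horiz : ∀ i, ¬ π.Vertical (f i)
  h_horiz : ∀ i, ¬ π.Vertical (h i)
  f_over : ∀ i, π.onE (f i) = e i
  h_over : ∀ i, π.onE (h i) = e i
  f_ne_h : ∀ i, f i ≠ h i
  g_vert : ∀ i, π.Vertical (g i)
  g_src : ∀ i, G.src (g i) = G.src (f i)
  g_dst : ∀ i, G.dst (g i) = G.src (h i)
  chain_f : ∀ i : ZMod n, i + 1 ≠ 0 → G.dst (f i) = G.src (f (i + 1))
  chain_h : ∀ i : ZMod n, i + 1 ≠ 0 → G.dst (h i) = G.src (h (i + 1))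
  twist_f : G.dst (f (-1)) = G.src (h 0)
  twist_h : G.dst (h (-1)) = G.src (f 0)
  k : ZMod n → ℤ
  k_ne : ∀ i, k i ≠ 0
  fiberweight : ∀ i, aG (g i) =
    k i • aB (e (i - 1)) - (if i = 0 then - k (i - 1) else k (i - 1)) • aB (e i)
  interior_count : Nat.card {p : G.V // InteriorVtx G aG p} = n - 1

/-- The type II signed structure: the signs of the labels of every second pair
of basic edges are reversed. -/
noncomputable def Section7.alphaII (S : Section7) : S.G.E → Zm 2 :=
  fun ed =>
    if ∃ i : ZMod S.n, Odd i.val ∧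
        (ed = S.f i ∨ ed = S.h i ∨ ed = S.G.rev (S.f i) ∨ ed = S.G.rev (S.h i))
    then - S.aG ed else S.aG ed


/-! ### Auxiliary development for Statement 11 -/

section GenGraph

lemma OrGraph.dst_rev (G : OrGraph) (e : G.E) : G.dst (G.rev e) = G.src e := by
  have h := G.src_rev (G.rev e); rw [G.rev_rev] at h; exact h.symm

lemma OrGraph.rev_inj (G : OrGraph) {e f : G.E} (h : G.rev e = G.rev f) : e = f := by
  have h2 := congrArg G.rev h; rwa [G.rev_rev, G.rev_rev] at h2

lemma GraphFib.vert_rev {G B : OrGraph} (π : GraphFib G B) (e : G.E) :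
    π.Vertical (G.rev e) ↔ π.Vertical e := by
  unfold GraphFib.Vertical
  rw [G.src_rev, G.dst_rev]; exact eq_comm

lemma indep_pm {a b a' b' : Zm 2} (h : Indep a b)
    (ha : a' = a ∨ a' = -a) (hb : b' = b ∨ b' = -b) : Indep a' b' := by
  intro c d hcd
  rcases ha with rfl | rfl <;> rcases hb with rfl | rfl
  · exact h c d hcd
  · have := h c (-d) (by rw [neg_smul, ← smul_neg]; exact hcd)
    exact ⟨this.1, by have := this.2; omega⟩
  · have := h (-c) d (by rw [neg_smul, ← smul_neg]; exact hcd)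
    exact ⟨by have := this.1; omega, this.2⟩
  · have := h (-c) (-d) (by rw [neg_smul, neg_smul, ← smul_neg, ← smul_neg]; exact hcd)
    exact ⟨by have := this.1; omega, by have := this.2; omega⟩

lemma indep_smul_pm {a b a' b' : Zm 2} (h : Indep a b) {s t : ℤ}
    (hs : s = 1 ∨ s = -1) (ht : t = 1 ∨ t = -1)
    (ha : a' = s • a) (hb : b' = t • b) : Indep a' b' := by
  refine indep_pm h ?_ ?_
  · rcases hs with rfl | rfl
    · left; rw [ha, one_smul]
    · right; rw [ha, neg_smul, one_smul]
  · rcases ht with rfl | rfl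
    · left; rw [hb, one_smul]
    · right; rw [hb, neg_smul, one_smul]

lemma neg_eq_add_neg_two_smul (x : Zm 2) : -x = x + (-2 : ℤ) • x := by
  have : (-2 : ℤ) • x = -(x + x) := by
    rw [show (-2 : ℤ) = -(2:ℤ) by ring, neg_smul, two_smul]
  rw [this]; abel

lemma smul_expand (aF aE : Zm 2) (sT sE c : ℤ) (hsE : sE * sE = 1) :
    sT • (aF + c • aE) = sT • aF + (sT * c * sE) • (sE • aE) := by
  rw [smul_add, smul_smul, smul_smul]
  congr 1
  rw [show sT * c * sE * sE = sT * c * (sE * sE) by ring, hsE, mul_one]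

lemma conn_ne_rev {G : OrGraph} (C : Connection G) {x y : G.E}
    (hsrc : G.src y = G.src x) (hxy : y ≠ x) : C.t x y ≠ G.rev x := by
  intro h
  have h1 := C.t_inv x y hsrc
  rw [h, C.t_self (G.rev x), G.rev_rev] at h1
  exact hxy h1.symm

lemma triple_exhaust (G : OrGraph) (p : G.V)
    (hcard : Fintype.card {e : G.E // G.src e = p} = 3)
    (a b c : G.E) (ha : G.src a = p) (hb : G.src b = p) (hc : G.src c = p)
    (hab : a ≠ b) (hac : a ≠ c) (hbc : b ≠ c) :
    ∀ x, G.src x = p → x = a ∨ x = b ∨ x = c := by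
  classical
  intro x hx
  by_contra hcon
  push_neg at hcon
  obtain ⟨hxa, hxb, hxc⟩ := hcon
  have hsub : ({x, a, b, c} : Finset G.E) ⊆ Finset.univ.filter (fun e => G.src e = p) := by
    intro y hy
    simp only [Finset.mem_insert, Finset.mem_singleton] at hy
    rcases hy with rfl | rfl | rfl | rfl <;> simp [hx, ha, hb, hc]
  have hc4 : ({x, a, b, c} : Finset G.E).card = 4 := by
    rw [Finset.card_insert_of_notMem (by simp [hxa, hxb, hxc]),
        Finset.card_insert_of_notMem (by simp [hab, hac]),
        Finset.card_insert_of_notMem (by simp [hbc]), Finset.card_singleton]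
  have hle := Finset.card_le_card hsub
  have h3 : (Finset.univ.filter (fun e : G.E => G.src e = p)).card = 3 := by
    rw [← hcard]; exact (Fintype.card_subtype _).symm
  omega

end GenGraph

namespace Section7

variable (S : Section7)

/-! #### Chosen connections -/

noncomputable def CG : Connection S.G := S.hfib.2.choose

noncomputable def CBc : Connection S.B := S.hfib.2.choose_spec.choose

lemma compatG : SignedCompat S.G S.aG S.CG := S.hfib.2.choose_spec.choose_spec.1

lemma compatB : SignedCompat S.B S.aB S.CBc := S.hfib.2.choose_spec.choose_spec.2.1

lemma fibcompat : SignedGKMFibCompat S.aG S.aB S.π S.CG S.CBc :=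
  S.hfib.2.choose_spec.choose_spec.2.2

lemma isfib : S.π.IsFib := S.hfib.1

lemma aB_rev (ed : S.B.E) : S.aB (S.B.rev ed) = - S.aB ed := S.compatB.2.2 ed

lemma aG_rev (ed : S.G.E) : S.aG (S.G.rev ed) = - S.aG ed := S.compatG.2.2 ed

/-! #### Base graph combinatorics -/

lemma vinj {i j : ZMod S.n} (h : S.v i = S.v j) : i = j := S.v_bij.1 h

lemma einj {i j : ZMod S.n} (h : S.e i = S.e j) : i = j := by
  have h2 := congrArg S.B.src h
  rw [S.src_e, S.src_e] at h2
  exact S.vinj h2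

lemma two_ne : (2 : ZMod S.n) ≠ 0 := by
  haveI : NeZero S.n := ⟨by have := S.hn; omega⟩
  intro h
  have h2 : ((2 : ℕ) : ZMod S.n) = 0 := by push_cast; exact h
  have := (ZMod.natCast_eq_zero_iff 2 S.n).mp h2
  have := Nat.le_of_dvd (by norm_num) this
  have := S.hn
  omega

lemma e_ne_rev (i j : ZMod S.n) : S.e i ≠ S.B.rev (S.e j) := by
  intro h
  have h1 : S.v i = S.v (j + 1) := by
    rw [← S.src_e i, ← S.dst_e j, h, S.B.src_rev]
  have h2 : S.v (i + 1) = S.v j := by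
    rw [← S.dst_e i, ← S.src_e j, h, S.B.dst_rev]
  have hij : i = j + 1 := S.vinj h1
  have hij2 : i + 1 = j := S.vinj h2
  rw [hij] at hij2
  exact S.two_ne (by linear_combination hij2)

lemma base_edge_cases {ed : S.B.E} {i : ZMod S.n} (h : S.B.src ed = S.v i) :
    ed = S.e i ∨ ed = S.B.rev (S.e (i - 1)) := by
  rcases S.e_cover ed with ⟨j, hj | hj⟩
  · left
    have : S.v j = S.v i := by rw [← S.src_e j, ← hj]; exact h
    rw [hj, S.vinj this]
  · right
    have : S.v (j + 1) = S.v i := by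
      rw [← S.dst_e j]
      rw [hj, S.B.src_rev] at h
      exact h
    have hji : j = i - 1 := by
      have h5 := S.vinj this
      rw [← h5]; ring
    rw [hj, hji]

/-! #### Forced transport on the base -/


lemma CB_t_ef (i : ZMod S.n) :
    S.CBc.t (S.e i) (S.B.rev (S.e (i - 1))) = S.e (i + 1) := by
  have hsrc : S.B.src (S.B.rev (S.e (i - 1))) = S.B.src (S.e i) := by
    rw [S.B.src_rev, S.dst_e, S.src_e]
    congr 1; ring
  have hne : S.B.rev (S.e (i - 1)) ≠ S.e i := fun h => S.e_ne_rev i (i-1) h.symm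
  have hs := S.CBc.src_t (S.e i) _ hsrc
  rw [S.dst_e] at hs
  rcases S.base_edge_cases hs with h | h
  · exact h
  · exfalso
    have : (i : ZMod S.n) + 1 - 1 = i := by ring
    rw [this] at h
    exact conn_ne_rev S.CBc hsrc hne h

lemma CB_t_fe (i : ZMod S.n) :
    S.CBc.t (S.B.rev (S.e (i - 1))) (S.e i) = S.B.rev (S.e (i - 2)) := by
  have hsrc : S.B.src (S.e i) = S.B.src (S.B.rev (S.e (i - 1))) := by
    rw [S.B.src_rev, S.dst_e, S.src_e]
    congr 1; ring
  have hne : S.e i ≠ S.B.rev (S.e (i - 1)) := S.e_ne_rev i (i-1)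
  have hs := S.CBc.src_t _ _ hsrc
  rw [S.B.dst_rev, S.src_e] at hs
  rcases S.base_edge_cases hs with h | h
  · exfalso
    have h2 := conn_ne_rev S.CBc hsrc hne
    rw [S.B.rev_rev] at h2
    exact h2 h
  · rw [h]
    congr 2; ring

/-! #### Parity and signs -/

noncomputable def sgn (i : ZMod S.n) : ℤ := if Odd i.val then -1 else 1

lemma sgn_cases (i : ZMod S.n) : S.sgn i = 1 ∨ S.sgn i = -1 := by
  unfold sgn; split <;> simp

lemma sgn_sq (i : ZMod S.n) : S.sgn i * S.sgn i = 1 := by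
  rcases S.sgn_cases i with h | h <;> rw [h] <;> ring

lemma odd_succ (hev : Even S.n) (i : ZMod S.n) :
    Odd ((i + 1 : ZMod S.n)).val ↔ ¬ Odd i.val := by
  haveI : NeZero S.n := ⟨by have := S.hn; omega⟩
  haveI : Fact (1 < S.n) := ⟨by have := S.hn; omega⟩
  have h1 : ((i + 1 : ZMod S.n)).val = (i.val + 1) % S.n := by
    rw [ZMod.val_add, ZMod.val_one]
  have hlt : i.val < S.n := ZMod.val_lt i
  obtain ⟨m, hm⟩ := hev
  rw [Nat.odd_iff, Nat.odd_iff, h1]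
  rcases Nat.lt_or_ge (i.val + 1) S.n with h | h
  · rw [Nat.mod_eq_of_lt h]; omega
  · have hn : i.val + 1 = S.n := by omega
    rw [hn, Nat.mod_self]; omega

lemma odd_pred (hev : Even S.n) (i : ZMod S.n) :
    Odd ((i - 1 : ZMod S.n)).val ↔ ¬ Odd i.val := by
  have := S.odd_succ hev (i - 1)
  rw [sub_add_cancel] at this
  tauto

lemma sgn_succ (hev : Even S.n) (i : ZMod S.n) : S.sgn (i + 1) = - S.sgn i := by
  unfold sgn
  by_cases h : Odd i.val
  · rw [if_pos h, if_neg (by rw [S.odd_succ hev i]; exact fun hc => hc h)]; norm_num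
  · rw [if_neg h, if_pos ((S.odd_succ hev i).mpr h)]

lemma sgn_pred (hev : Even S.n) (i : ZMod S.n) : S.sgn (i - 1) = - S.sgn i := by
  unfold sgn
  by_cases h : Odd i.val
  · rw [if_pos h, if_neg (by rw [S.odd_pred hev i]; exact fun hc => hc h)]; norm_num
  · rw [if_neg h, if_pos ((S.odd_pred hev i).mpr h)]

/-! #### The graph `Γ`: vertices and edges -/

lemma onV_src_f (i : ZMod S.n) : S.π.onV (S.G.src (S.f i)) = S.v i := by
  have h := S.π.src_onE (S.f i) (S.f_horiz i)
  rw [S.f_over, S.src_e] at h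
  exact h.symm

lemma onV_src_h (i : ZMod S.n) : S.π.onV (S.G.src (S.h i)) = S.v i := by
  have h := S.π.src_onE (S.h i) (S.h_horiz i)
  rw [S.h_over, S.src_e] at h
  exact h.symm

lemma src_f_inj {i j : ZMod S.n} (h : S.G.src (S.f i) = S.G.src (S.f j)) : i = j := by
  apply S.vinj
  rw [← S.onV_src_f, ← S.onV_src_f, h]

lemma src_h_inj {i j : ZMod S.n} (h : S.G.src (S.h i) = S.G.src (S.h j)) : i = j := by
  apply S.vinj
  rw [← S.onV_src_h, ← S.onV_src_h, h]

lemma src_f_ne_src_h (i j : ZMod S.n) : S.G.src (S.f i) ≠ S.G.src (S.h j) := by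
  intro h
  have hij : i = j := by
    apply S.vinj
    rw [← S.onV_src_f, ← S.onV_src_h, h]
  subst hij
  apply S.G.no_loop (S.g i)
  rw [S.g_src, S.g_dst, h]

lemma onE_rev_f (i : ZMod S.n) : S.π.onE (S.G.rev (S.f i)) = S.B.rev (S.e i) := by
  rw [S.π.rev_onE (S.f i) (S.f_horiz i), S.f_over]

lemma onE_rev_h (i : ZMod S.n) : S.π.onE (S.G.rev (S.h i)) = S.B.rev (S.e i) := by
  rw [S.π.rev_onE (S.h i) (S.h_horiz i), S.h_over]

lemma f_ne_rev_f (i j : ZMod S.n) : S.f i ≠ S.G.rev (S.f j) := by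
  intro h
  apply S.e_ne_rev i j
  rw [← S.f_over i, ← S.onE_rev_f j, h]

lemma f_ne_rev_h (i j : ZMod S.n) : S.f i ≠ S.G.rev (S.h j) := by
  intro h
  apply S.e_ne_rev i j
  rw [← S.f_over i, ← S.onE_rev_h j, h]

lemma h_ne_rev_f (i j : ZMod S.n) : S.h i ≠ S.G.rev (S.f j) := by
  intro h
  apply S.e_ne_rev i j
  rw [← S.h_over i, ← S.onE_rev_f j, h]

lemma h_ne_rev_h (i j : ZMod S.n) : S.h i ≠ S.G.rev (S.h j) := by
  intro h
  apply S.e_ne_rev i j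
  rw [← S.h_over i, ← S.onE_rev_h j, h]

lemma f_ne_h' (i j : ZMod S.n) : S.f i ≠ S.h j := by
  intro h
  exact S.src_f_ne_src_h i j (congrArg S.G.src h)

lemma f_eq_f {i j : ZMod S.n} (h : S.f i = S.f j) : i = j :=
  S.src_f_inj (congrArg S.G.src h)

lemma h_eq_h {i j : ZMod S.n} (h : S.h i = S.h j) : i = j :=
  S.src_h_inj (congrArg S.G.src h)

/-- the third edge at `src (f i)` -/
noncomputable def prevF (i : ZMod S.n) : S.G.E :=
  if i = 0 then S.G.rev (S.h (i - 1)) else S.G.rev (S.f (i - 1))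

/-- the third edge at `src (h i)` -/
noncomputable def prevH (i : ZMod S.n) : S.G.E :=
  if i = 0 then S.G.rev (S.f (i - 1)) else S.G.rev (S.h (i - 1))

lemma src_prevF (i : ZMod S.n) : S.G.src (S.prevF i) = S.G.src (S.f i) := by
  unfold prevF
  split
  · next h0 =>
    subst h0
    rw [S.G.src_rev]
    have : (0 : ZMod S.n) - 1 = -1 := by ring
    rw [this, S.twist_h]
  · next h0 =>
    rw [S.G.src_rev]
    have hne : (i - 1) + 1 ≠ 0 := by
      intro hc; apply h0; rw [← hc]; ring
    have := S.chain_f (i - 1) hne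
    rw [sub_add_cancel] at this
    exact this

lemma src_prevH (i : ZMod S.n) : S.G.src (S.prevH i) = S.G.src (S.h i) := by
  unfold prevH
  split
  · next h0 =>
    subst h0
    rw [S.G.src_rev]
    have : (0 : ZMod S.n) - 1 = -1 := by ring
    rw [this, S.twist_f]
  · next h0 =>
    rw [S.G.src_rev]
    have hne : (i - 1) + 1 ≠ 0 := by
      intro hc; apply h0; rw [← hc]; ring
    have := S.chain_h (i - 1) hne
    rw [sub_add_cancel] at this
    exact this

lemma prevF_horiz (i : ZMod S.n) : ¬ S.π.Vertical (S.prevF i) := by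
  unfold prevF; split
  · rw [S.π.vert_rev]; exact S.h_horiz _
  · rw [S.π.vert_rev]; exact S.f_horiz _

lemma prevH_horiz (i : ZMod S.n) : ¬ S.π.Vertical (S.prevH i) := by
  unfold prevH; split
  · rw [S.π.vert_rev]; exact S.f_horiz _
  · rw [S.π.vert_rev]; exact S.h_horiz _

lemma onE_prevF (i : ZMod S.n) : S.π.onE (S.prevF i) = S.B.rev (S.e (i - 1)) := by
  unfold prevF; split
  · exact S.onE_rev_h _
  · exact S.onE_rev_f _

lemma onE_prevH (i : ZMod S.n) : S.π.onE (S.prevH i) = S.B.rev (S.e (i - 1)) := by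
  unfold prevH; split
  · exact S.onE_rev_f _
  · exact S.onE_rev_h _

lemma f_ne_prevF (i : ZMod S.n) : S.f i ≠ S.prevF i := by
  intro h
  apply S.e_ne_rev i (i - 1)
  rw [← S.f_over i, ← S.onE_prevF i, h]

lemma h_ne_prevH (i : ZMod S.n) : S.h i ≠ S.prevH i := by
  intro h
  apply S.e_ne_rev i (i - 1)
  rw [← S.h_over i, ← S.onE_prevH i, h]

lemma edges_at_f (i : ZMod S.n) :
    ∀ x, S.G.src x = S.G.src (S.f i) → x = S.f i ∨ x = S.g i ∨ x = S.prevF i := by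
  apply triple_exhaust S.G _ (S.hG.1 _) _ _ _ rfl (S.g_src i) (S.src_prevF i)
  · intro h; exact S.f_horiz i (h ▸ S.g_vert i)
  · exact S.f_ne_prevF i
  · intro h; exact S.prevF_horiz i (h ▸ S.g_vert i)

lemma edges_at_h (i : ZMod S.n) :
    ∀ x, S.G.src x = S.G.src (S.h i) →
      x = S.h i ∨ x = S.G.rev (S.g i) ∨ x = S.prevH i := by
  apply triple_exhaust S.G _ (S.hG.1 _) _ _ _ rfl
    (by rw [S.G.src_rev, S.g_dst]) (S.src_prevH i)
  · intro h
    apply S.h_horiz i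
    rw [h, S.π.vert_rev]; exact S.g_vert i
  · exact S.h_ne_prevH i
  · intro h
    apply S.prevH_horiz i
    rw [← h, S.π.vert_rev]; exact S.g_vert i

lemma vtx_classify (p : S.G.V) :
    ∃ i : ZMod S.n, p = S.G.src (S.f i) ∨ p = S.G.src (S.h i) := by
  have hconn := S.hG.2.1 (S.G.src (S.f 0)) p
  induction hconn with
  | refl => exact ⟨0, Or.inl rfl⟩
  | tail hbc hadj ih =>
      obtain ⟨i, hi⟩ := ih
      obtain ⟨ed, hsrc, hdst⟩ := hadj
      rcases hi with hb | hb
      · subst hb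
        rcases S.edges_at_f i ed hsrc with rfl | rfl | rfl
        · by_cases h0 : i + 1 = 0
          · have hi1 : i = -1 := by
              have : i = 0 - 1 := by rw [← h0]; ring
              rw [this]; ring
            refine ⟨0, Or.inr ?_⟩
            rw [← hdst, hi1, S.twist_f]
          · exact ⟨i + 1, Or.inl (by rw [← hdst, S.chain_f i h0])⟩
        · exact ⟨i, Or.inr (by rw [← hdst, S.g_dst])⟩
        · refine ⟨i - 1, ?_⟩
          unfold prevF at hdst
          split at hdst
          · next h0 => exact Or.inr (by rw [← hdst, S.G.dst_rev])
          · next h0 => exact Or.inl (by rw [← hdst, S.G.dst_rev])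
      · subst hb
        rcases S.edges_at_h i ed hsrc with rfl | rfl | rfl
        · by_cases h0 : i + 1 = 0
          · have hi1 : i = -1 := by
              have : i = 0 - 1 := by rw [← h0]; ring
              rw [this]; ring
            refine ⟨0, Or.inl ?_⟩
            rw [← hdst, hi1, S.twist_h]
          · exact ⟨i + 1, Or.inr (by rw [← hdst, S.chain_h i h0])⟩
        · exact ⟨i, Or.inl (by rw [← hdst, S.G.dst_rev, S.g_src])⟩
        · refine ⟨i - 1, ?_⟩
          unfold prevH at hdst
          split at hdst
          · next h0 => exact Or.inl (by rw [← hdst, S.G.dst_rev])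
          · next h0 => exact Or.inr (by rw [← hdst, S.G.dst_rev])

/-! #### Labels -/

lemma aG_f (i : ZMod S.n) : S.aG (S.f i) = S.aB (S.e i) := by
  have h := S.fibcompat.1 (S.f i) (S.f_horiz i)
  rwa [S.f_over] at h

lemma aG_h (i : ZMod S.n) : S.aG (S.h i) = S.aB (S.e i) := by
  have h := S.fibcompat.1 (S.h i) (S.h_horiz i)
  rwa [S.h_over] at h

lemma aG_prevF (i : ZMod S.n) : S.aG (S.prevF i) = - S.aB (S.e (i - 1)) := by
  unfold prevF; split
  · rw [S.aG_rev, S.aG_h]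
  · rw [S.aG_rev, S.aG_f]

lemma aG_prevH (i : ZMod S.n) : S.aG (S.prevH i) = - S.aB (S.e (i - 1)) := by
  unfold prevH; split
  · rw [S.aG_rev, S.aG_f]
  · rw [S.aG_rev, S.aG_h]

/-- The signed fiber weight coefficient `k'_{i-1}`. -/
noncomputable def kk (i : ZMod S.n) : ℤ := if i = 0 then - S.k (i - 1) else S.k (i - 1)

lemma kk_ne (i : ZMod S.n) : S.kk i ≠ 0 := by
  unfold kk; split
  · simp [S.k_ne]
  · exact S.k_ne _

lemma aG_g (i : ZMod S.n) :
    S.aG (S.g i) = S.k i • S.aB (S.e (i - 1)) - S.kk i • S.aB (S.e i) := by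
  rw [S.fiberweight i]; unfold kk
  split <;> rfl

/-! #### The flipped edge set and `alphaII` -/

def Flip (ed : S.G.E) : Prop :=
  ∃ i : ZMod S.n, Odd i.val ∧
    (ed = S.f i ∨ ed = S.h i ∨ ed = S.G.rev (S.f i) ∨ ed = S.G.rev (S.h i))

lemma alphaII_def (ed : S.G.E) :
    S.alphaII ed = if S.Flip ed then - S.aG ed else S.aG ed := rfl

lemma alphaII_pm (ed : S.G.E) :
    S.alphaII ed = S.aG ed ∨ S.alphaII ed = - S.aG ed := by
  rw [S.alphaII_def]; split
  · exact Or.inr rfl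
  · exact Or.inl rfl

lemma alphaII_sgn (ed : S.G.E) :
    ∃ s : ℤ, (s = 1 ∨ s = -1) ∧ S.alphaII ed = s • S.aG ed := by
  rcases S.alphaII_pm ed with h | h
  · exact ⟨1, Or.inl rfl, by rw [one_smul]; exact h⟩
  · exact ⟨-1, Or.inr rfl, by rw [neg_smul, one_smul]; exact h⟩

lemma flip_vert {ed : S.G.E} (hv : S.π.Vertical ed) : ¬ S.Flip ed := by
  rintro ⟨j, _, hc | hc | hc | hc⟩
  · exact S.f_horiz j (hc ▸ hv)
  · exact S.h_horiz j (hc ▸ hv)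
  · exact S.f_horiz j ((S.π.vert_rev (S.f j)).mp (hc ▸ hv))
  · exact S.h_horiz j ((S.π.vert_rev (S.h j)).mp (hc ▸ hv))

lemma alphaII_vert {ed : S.G.E} (hv : S.π.Vertical ed) : S.alphaII ed = S.aG ed := by
  rw [S.alphaII_def, if_neg (S.flip_vert hv)]

lemma flip_f (i : ZMod S.n) : S.Flip (S.f i) ↔ Odd i.val := by
  constructor
  · rintro ⟨j, hj, hc | hc | hc | hc⟩
    · rwa [S.f_eq_f hc]
    · exact absurd hc (S.f_ne_h' i j)
    · exact absurd hc (S.f_ne_rev_f i j)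
    · exact absurd hc (S.f_ne_rev_h i j)
  · intro hodd; exact ⟨i, hodd, Or.inl rfl⟩

lemma flip_h (i : ZMod S.n) : S.Flip (S.h i) ↔ Odd i.val := by
  constructor
  · rintro ⟨j, hj, hc | hc | hc | hc⟩
    · exact absurd hc.symm (S.f_ne_h' j i)
    · rwa [S.h_eq_h hc]
    · exact absurd hc (S.h_ne_rev_f i j)
    · exact absurd hc (S.h_ne_rev_h i j)
  · intro hodd; exact ⟨i, hodd, Or.inr (Or.inl rfl)⟩

lemma flip_rev (ed : S.G.E) : S.Flip (S.G.rev ed) ↔ S.Flip ed := by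
  constructor
  · rintro ⟨j, hj, hc | hc | hc | hc⟩
    · refine ⟨j, hj, Or.inr (Or.inr (Or.inl ?_))⟩
      rw [← hc, S.G.rev_rev]
    · refine ⟨j, hj, Or.inr (Or.inr (Or.inr ?_))⟩
      rw [← hc, S.G.rev_rev]
    · exact ⟨j, hj, Or.inl (S.G.rev_inj hc)⟩
    · exact ⟨j, hj, Or.inr (Or.inl (S.G.rev_inj hc))⟩
  · rintro ⟨j, hj, hc | hc | hc | hc⟩
    · exact ⟨j, hj, Or.inr (Or.inr (Or.inl (by rw [hc])))⟩
    · exact ⟨j, hj, Or.inr (Or.inr (Or.inr (by rw [hc])))⟩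
    · exact ⟨j, hj, Or.inl (by rw [hc, S.G.rev_rev])⟩
    · exact ⟨j, hj, Or.inr (Or.inl (by rw [hc, S.G.rev_rev]))⟩

lemma alphaII_rev (ed : S.G.E) : S.alphaII (S.G.rev ed) = - S.alphaII ed := by
  rw [S.alphaII_def, S.alphaII_def]
  by_cases hfl : S.Flip ed
  · rw [if_pos ((S.flip_rev ed).mpr hfl), if_pos hfl, S.aG_rev]
  · rw [if_neg (fun hc => hfl ((S.flip_rev ed).mp hc)), if_neg hfl, S.aG_rev]

lemma alphaII_f (i : ZMod S.n) : S.alphaII (S.f i) = S.sgn i • S.aG (S.f i) := by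
  rw [S.alphaII_def]
  unfold sgn
  by_cases hodd : Odd i.val
  · rw [if_pos ((S.flip_f i).mpr hodd), if_pos hodd, neg_smul, one_smul]
  · rw [if_neg (fun hc => hodd ((S.flip_f i).mp hc)), if_neg hodd, one_smul]

lemma alphaII_h (i : ZMod S.n) : S.alphaII (S.h i) = S.sgn i • S.aG (S.h i) := by
  rw [S.alphaII_def]
  unfold sgn
  by_cases hodd : Odd i.val
  · rw [if_pos ((S.flip_h i).mpr hodd), if_pos hodd, neg_smul, one_smul]
  · rw [if_neg (fun hc => hodd ((S.flip_h i).mp hc)), if_neg hodd, one_smul]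

lemma alphaII_prevF (i : ZMod S.n) :
    S.alphaII (S.prevF i) = S.sgn (i - 1) • S.aG (S.prevF i) := by
  unfold prevF; split
  · rw [S.alphaII_rev, S.alphaII_h, S.aG_rev, smul_neg]
  · rw [S.alphaII_rev, S.alphaII_f, S.aG_rev, smul_neg]

lemma alphaII_prevH (i : ZMod S.n) :
    S.alphaII (S.prevH i) = S.sgn (i - 1) • S.aG (S.prevH i) := by
  unfold prevH; split
  · rw [S.alphaII_rev, S.alphaII_f, S.aG_rev, smul_neg]
  · rw [S.alphaII_rev, S.alphaII_h, S.aG_rev, smul_neg]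

lemma alphaII_g (i : ZMod S.n) : S.alphaII (S.g i) = S.aG (S.g i) :=
  S.alphaII_vert (S.g_vert i)

lemma alphaII_revg (i : ZMod S.n) : S.alphaII (S.G.rev (S.g i)) = - S.aG (S.g i) := by
  rw [S.alphaII_rev, S.alphaII_g]

/-! #### Horizontal lifts and unique vertical edges -/

lemma horiz_exists (p : S.G.V) (b : S.B.E) (hb : S.B.src b = S.π.onV p) :
    ∃ y : S.G.E, S.G.src y = p ∧ ¬ S.π.Vertical y ∧ S.π.onE y = b := by
  obtain ⟨⟨y, hy1, hy2⟩, hy3⟩ := (S.isfib p).2 ⟨b, hb⟩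
  exact ⟨y, hy1, hy2, congrArg Subtype.val hy3⟩

lemma horiz_unique {p : S.G.V} {y y' : S.G.E}
    (h1 : S.G.src y = p) (h2 : ¬ S.π.Vertical y)
    (h1' : S.G.src y' = p) (h2' : ¬ S.π.Vertical y') (h3 : S.π.onE y = S.π.onE y') :
    y = y' := by
  have heq := (S.isfib p).1 (a₁ := ⟨y, h1, h2⟩) (a₂ := ⟨y', h1', h2'⟩) (Subtype.ext h3)
  exact congrArg Subtype.val heq

lemma vert_unique {x y : S.G.E} (hx : S.π.Vertical x) (hy : S.π.Vertical y)
    (h : S.G.src y = S.G.src x) : y = x := by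
  obtain ⟨i, hi | hi⟩ := S.vtx_classify (S.G.src x)
  · rcases S.edges_at_f i y (h.trans hi) with rfl | rfl | rfl
    · exact absurd hy (S.f_horiz i)
    · rcases S.edges_at_f i x hi with rfl | rfl | rfl
      · exact absurd hx (S.f_horiz i)
      · rfl
      · exact absurd hx (S.prevF_horiz i)
    · exact absurd hy (S.prevF_horiz i)
  · rcases S.edges_at_h i y (h.trans hi) with rfl | rfl | rfl
    · exact absurd hy (S.h_horiz i)
    · rcases S.edges_at_h i x hi with rfl | rfl | rfl
      · exact absurd hx (S.h_horiz i)
      · rfl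
      · exact absurd hx (S.prevH_horiz i)
    · exact absurd hy (S.prevH_horiz i)

lemma aG_onE {ed : S.G.E} (hh : ¬ S.π.Vertical ed) : S.aG ed = S.aB (S.π.onE ed) :=
  S.fibcompat.1 ed hh

lemma alphaII_of_onE {ed : S.G.E} (hh : ¬ S.π.Vertical ed) {j : ZMod S.n}
    (hj : S.π.onE ed = S.e j ∨ S.π.onE ed = S.B.rev (S.e j)) :
    S.alphaII ed = S.sgn j • S.aG ed := by
  obtain ⟨i, hi | hi⟩ := S.vtx_classify (S.G.src ed)
  · rcases S.edges_at_f i ed hi with rfl | rfl | rfl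
    · rcases hj with hj | hj
      · rw [S.f_over] at hj
        rw [S.alphaII_f, S.einj hj]
      · rw [S.f_over] at hj
        exact absurd hj (S.e_ne_rev i j)
    · exact absurd (S.g_vert i) hh
    · rcases hj with hj | hj
      · rw [S.onE_prevF] at hj
        exact absurd hj.symm (S.e_ne_rev j (i - 1))
      · rw [S.onE_prevF] at hj
        have := S.B.rev_inj hj
        rw [S.alphaII_prevF, S.einj this]
  · rcases S.edges_at_h i ed hi with rfl | rfl | rfl
    · rcases hj with hj | hj
      · rw [S.h_over] at hj
        rw [S.alphaII_h, S.einj hj]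
      · rw [S.h_over] at hj
        exact absurd hj (S.e_ne_rev i j)
    · exact absurd ((S.π.vert_rev (S.g i)).mpr (S.g_vert i)) hh
    · rcases hj with hj | hj
      · rw [S.onE_prevH] at hj
        exact absurd hj.symm (S.e_ne_rev j (i - 1))
      · rw [S.onE_prevH] at hj
        have := S.B.rev_inj hj
        rw [S.alphaII_prevH, S.einj this]

lemma alphaII_onE_congr {d d' : S.G.E} (hd : ¬ S.π.Vertical d) (hd' : ¬ S.π.Vertical d')
    (h : S.π.onE d' = S.π.onE d) : S.alphaII d' = S.alphaII d := by
  obtain ⟨j, hj | hj⟩ := S.e_cover (S.π.onE d)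
  · rw [S.alphaII_of_onE hd (Or.inl hj), S.alphaII_of_onE hd' (Or.inl (h.trans hj))]
    rw [S.aG_onE hd, S.aG_onE hd', h]
  · rw [S.alphaII_of_onE hd (Or.inr hj), S.alphaII_of_onE hd' (Or.inr (h.trans hj))]
    rw [S.aG_onE hd, S.aG_onE hd', h]

/-! #### The corrected connection -/

noncomputable def tII (e f : S.G.E) : S.G.E :=
  if hc : S.π.Vertical e ∧ ¬ S.π.Vertical f ∧ S.G.src f = S.G.src e then
    (S.horiz_exists (S.G.dst e) (S.π.onE f)
      (by rw [S.π.src_onE f hc.2.1, hc.2.2]; exact hc.1)).choose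
  else S.CG.t e f

lemma tII_neg {e f : S.G.E}
    (hc : ¬ (S.π.Vertical e ∧ ¬ S.π.Vertical f ∧ S.G.src f = S.G.src e)) :
    S.tII e f = S.CG.t e f := dif_neg hc

lemma tII_pos {e f : S.G.E}
    (hc : S.π.Vertical e ∧ ¬ S.π.Vertical f ∧ S.G.src f = S.G.src e) :
    S.G.src (S.tII e f) = S.G.dst e ∧ ¬ S.π.Vertical (S.tII e f) ∧
      S.π.onE (S.tII e f) = S.π.onE f := by
  unfold tII
  rw [dif_pos hc]
  exact (S.horiz_exists (S.G.dst e) (S.π.onE f)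
    (by rw [S.π.src_onE f hc.2.1, hc.2.2]; exact hc.1)).choose_spec

noncomputable def CII : Connection S.G where
  t := S.tII
  src_t := by
    intro e f hsrc
    by_cases hc : S.π.Vertical e ∧ ¬ S.π.Vertical f ∧ S.G.src f = S.G.src e
    · exact (S.tII_pos hc).1
    · rw [S.tII_neg hc]; exact S.CG.src_t e f hsrc
  t_self := by
    intro e
    rw [S.tII_neg (fun hc => hc.2.1 hc.1)]
    exact S.CG.t_self e
  t_inv := by
    intro e f hsrc
    by_cases hve : S.π.Vertical e
    · by_cases hvf : S.π.Vertical f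
      · have hfe : f = e := S.vert_unique hve hvf hsrc
        subst hfe
        rw [S.tII_neg (fun hc => hc.2.1 hc.1), S.CG.t_self f,
            S.tII_neg (fun hc => hc.2.1 hc.1), S.CG.t_self, S.G.rev_rev]
      · have hc : S.π.Vertical e ∧ ¬ S.π.Vertical f ∧ S.G.src f = S.G.src e := ⟨hve, hvf, hsrc⟩
        obtain ⟨hy1, hy2, hy3⟩ := S.tII_pos hc
        have hc2 : S.π.Vertical (S.G.rev e) ∧ ¬ S.π.Vertical (S.tII e f) ∧
            S.G.src (S.tII e f) = S.G.src (S.G.rev e) := by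
          refine ⟨(S.π.vert_rev e).mpr hve, hy2, ?_⟩
          rw [hy1, S.G.src_rev]
        obtain ⟨hz1, hz2, hz3⟩ := S.tII_pos hc2
        refine S.horiz_unique hz1 hz2 ?_ hvf ?_
        · rw [S.G.dst_rev]
          exact hsrc
        · rw [hz3, hy3]
    · rw [S.tII_neg (fun hc => hve hc.1)]
      have hnrev : ¬ S.π.Vertical (S.G.rev e) := fun hx => hve ((S.π.vert_rev e).mp hx)
      rw [S.tII_neg (fun hc => hnrev hc.1)]
      exact S.CG.t_inv e f hsrc

lemma CII_t (e f : S.G.E) : S.CII.t e f = S.tII e f := rfl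

lemma compatII (hev : Even S.n) : SignedCompat S.G S.alphaII S.CII := by
  refine ⟨?_, ?_, S.alphaII_rev⟩
  · intro x y hsrc hne
    obtain ⟨s, hs, hxs⟩ := S.alphaII_sgn x
    obtain ⟨t, ht, hyt⟩ := S.alphaII_sgn y
    exact indep_smul_pm (S.compatG.1 x y hsrc hne) hs ht hxs hyt
  · intro x y hsrc
    rw [S.CII_t]
    by_cases hyx : y = x
    · subst hyx
      refine ⟨-2, ?_⟩
      rw [S.tII_neg (fun hc => hc.2.1 hc.1), S.CG.t_self y, S.alphaII_rev]
      exact neg_eq_add_neg_two_smul _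
    by_cases hvx : S.π.Vertical x
    · by_cases hvy : S.π.Vertical y
      · exact absurd (S.vert_unique hvx hvy hsrc) hyx
      · have hc : S.π.Vertical x ∧ ¬ S.π.Vertical y ∧ S.G.src y = S.G.src x := ⟨hvx, hvy, hsrc⟩
        obtain ⟨ht1, ht2, ht3⟩ := S.tII_pos hc
        refine ⟨0, ?_⟩
        rw [zero_smul, add_zero]
        exact S.alphaII_onE_congr hvy ht2 ht3
    · rw [S.tII_neg (fun hc => hvx hc.1)]
      obtain ⟨c, hcg⟩ := S.compatG.2.1 x y hsrc
      by_cases hvy : S.π.Vertical y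
      · have hvt : S.π.Vertical (S.CG.t x y) := S.fibcompat.2.1 x y hsrc hvy
        obtain ⟨s, hs, hxs⟩ := S.alphaII_sgn x
        refine ⟨c * s, ?_⟩
        rw [S.alphaII_vert hvt, S.alphaII_vert hvy, hcg, hxs, smul_smul]
        rcases hs with rfl | rfl <;> norm_num
      · obtain ⟨hvt, honE⟩ := S.fibcompat.2.2 x y hsrc hvx hvy
        obtain ⟨iV, hiV⟩ := S.v_bij.2 (S.π.onV (S.G.src x))
        have hbx : S.B.src (S.π.onE x) = S.v iV := by rw [S.π.src_onE x hvx, hiV]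
        have hby : S.B.src (S.π.onE y) = S.v iV := by
          rw [S.π.src_onE y hvy, hsrc, hiV]
        have honexy : S.π.onE y ≠ S.π.onE x := by
          intro hq
          exact hyx (S.horiz_unique hsrc hvy rfl hvx hq)
        rcases S.base_edge_cases hbx with hx1 | hx1 <;> rcases S.base_edge_cases hby with hy1 | hy1
        · exact absurd (hy1.trans hx1.symm) honexy
        · have ht1 : S.π.onE (S.CG.t x y) = S.e (iV + 1) := by
            rw [honE, hx1, hy1, S.CB_t_ef]
          refine ⟨S.sgn (iV + 1) * c * S.sgn iV, ?_⟩
          rw [S.alphaII_of_onE hvt (Or.inl ht1),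
              S.alphaII_of_onE hvy (Or.inr hy1),
              S.alphaII_of_onE hvx (Or.inl hx1), hcg,
              smul_expand _ _ _ _ _ (S.sgn_sq iV)]
          rw [show S.sgn (iV + 1) = S.sgn (iV - 1) by
            rw [S.sgn_succ hev, S.sgn_pred hev]]
        · have ht1 : S.π.onE (S.CG.t x y) = S.B.rev (S.e (iV - 2)) := by
            rw [honE, hx1, hy1, S.CB_t_fe]
          refine ⟨S.sgn (iV - 2) * c * S.sgn (iV - 1), ?_⟩
          rw [S.alphaII_of_onE hvt (Or.inr ht1),
              S.alphaII_of_onE hvy (Or.inl hy1),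
              S.alphaII_of_onE hvx (Or.inr hx1), hcg,
              smul_expand _ _ _ _ _ (S.sgn_sq (iV - 1))]
          rw [show S.sgn (iV - 2) = S.sgn iV by
            rw [show iV - 2 = iV - 1 - 1 by ring, S.sgn_pred hev, S.sgn_pred hev, neg_neg]]
        · exact absurd (hy1.trans hx1.symm) honexy

/-! #### The modified base structure -/

section Bprime

variable {sB' : S.B.E → Zm 2}
  (hB'e : ∀ i : ZMod S.n, sB' (S.e i) =
      (if Odd i.val then - S.aB (S.e i) else S.aB (S.e i)))
  (hB'rev : ∀ ed, sB' (S.B.rev ed) = - sB' ed)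

include hB'e

lemma sB'_e (i : ZMod S.n) : sB' (S.e i) = S.sgn i • S.aB (S.e i) := by
  rw [hB'e i]; unfold sgn
  by_cases h : Odd i.val
  · rw [if_pos h, if_pos h, neg_smul, one_smul]
  · rw [if_neg h, if_neg h, one_smul]

include hB'rev

lemma sB'_reve (i : ZMod S.n) :
    sB' (S.B.rev (S.e i)) = S.sgn i • S.aB (S.B.rev (S.e i)) := by
  rw [hB'rev, S.sB'_e hB'e, S.aB_rev, smul_neg]

lemma sB'_pm (ed : S.B.E) : sB' ed = S.aB ed ∨ sB' ed = - S.aB ed := by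
  obtain ⟨j, hj | hj⟩ := S.e_cover ed
  · subst hj
    rw [S.sB'_e hB'e]
    rcases S.sgn_cases j with h | h <;> rw [h]
    · left; rw [one_smul]
    · right; rw [neg_smul, one_smul]
  · subst hj
    rw [S.sB'_reve hB'e hB'rev]
    rcases S.sgn_cases j with h | h <;> rw [h]
    · left; rw [one_smul]
    · right; rw [neg_smul, one_smul]

lemma compatB' (hev : Even S.n) : SignedCompat S.B sB' S.CBc := by
  refine ⟨?_, ?_, hB'rev⟩
  · intro x y hsrc hne
    exact indep_pm (S.compatB.1 x y hsrc hne) (S.sB'_pm hB'e hB'rev x) (S.sB'_pm hB'e hB'rev y)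
  · intro x y hsrc
    by_cases hyx : y = x
    · subst hyx
      refine ⟨-2, ?_⟩
      rw [S.CBc.t_self y, hB'rev]
      exact neg_eq_add_neg_two_smul _
    · obtain ⟨iV, hiV⟩ := S.v_bij.2 (S.B.src x)
      obtain ⟨c, hc⟩ := S.compatB.2.1 x y hsrc
      rcases S.base_edge_cases (show S.B.src x = S.v iV from hiV.symm) with hx1 | hx1 <;>
        rcases S.base_edge_cases (show S.B.src y = S.v iV from by rw [hsrc]; exact hiV.symm)
          with hy1 | hy1
      · exact absurd (hy1.trans hx1.symm) hyx
      · subst hx1; subst hy1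
        rw [S.CB_t_ef] at hc ⊢
        refine ⟨S.sgn (iV + 1) * c * S.sgn iV, ?_⟩
        rw [S.sB'_e hB'e (iV + 1), S.sB'_e hB'e iV, S.sB'_reve hB'e hB'rev (iV - 1), hc,
            smul_expand _ _ _ _ _ (S.sgn_sq iV)]
        rw [show S.sgn (iV + 1) = S.sgn (iV - 1) by rw [S.sgn_succ hev, S.sgn_pred hev]]
      · subst hx1; subst hy1
        rw [S.CB_t_fe] at hc ⊢
        refine ⟨S.sgn (iV - 2) * c * S.sgn (iV - 1), ?_⟩
        rw [S.sB'_reve hB'e hB'rev (iV - 2), S.sB'_e hB'e iV,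
            S.sB'_reve hB'e hB'rev (iV - 1), hc,
            smul_expand _ _ _ _ _ (S.sgn_sq (iV - 1))]
        rw [show S.sgn (iV - 2) = S.sgn iV by
          rw [show iV - 2 = iV - 1 - 1 by ring, S.sgn_pred hev, S.sgn_pred hev, neg_neg]]
      · exact absurd (hy1.trans hx1.symm) hyx

lemma partB' (hev : Even S.n) : IsSignedGKM S.B 2 sB' :=
  ⟨S.hB.1, S.hB.2.1, S.CBc, S.compatB' hB'e hB'rev hev⟩

lemma alphaII_sB' {ed : S.G.E} (hh : ¬ S.π.Vertical ed) :
    S.alphaII ed = sB' (S.π.onE ed) := by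
  obtain ⟨j, hj | hj⟩ := S.e_cover (S.π.onE ed)
  · rw [S.alphaII_of_onE hh (Or.inl hj), S.aG_onE hh, hj, S.sB'_e hB'e]
  · rw [S.alphaII_of_onE hh (Or.inr hj), S.aG_onE hh, hj, S.sB'_reve hB'e hB'rev]

lemma fibcompatII (hev : Even S.n) :
    SignedGKMFibCompat S.alphaII sB' S.π S.CII S.CBc := by
  refine ⟨fun ed hh => S.alphaII_sB' hB'e hB'rev hh, ?_, ?_⟩
  · intro e f hsrc hvf
    rw [S.CII_t, S.tII_neg (fun hc => hc.2.1 hvf)]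
    exact S.fibcompat.2.1 e f hsrc hvf
  · intro e f hsrc hve hvf
    rw [S.CII_t, S.tII_neg (fun hc => hve hc.1)]
    exact S.fibcompat.2.2 e f hsrc hve hvf

lemma part3 (hev : Even S.n) : IsSignedGKMFib S.alphaII sB' S.π :=
  ⟨S.isfib, S.CII, S.CBc, S.compatII hev, S.compatB' hB'e hB'rev hev,
    S.fibcompatII hB'e hB'rev hev⟩

lemma part4 (hev : Even S.n) (i : ZMod S.n) :
    S.alphaII (S.g i) =
      (if Even i.val then - S.k i else S.k i) • sB' (S.e (i - 1)) -
      (if i = 0 then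
          -(if Even ((i - 1 : ZMod S.n)).val then - S.k (i - 1) else S.k (i - 1))
        else (if Even ((i - 1 : ZMod S.n)).val then - S.k (i - 1) else S.k (i - 1))) •
        sB' (S.e i) := by
  have hpar : Even ((i - 1 : ZMod S.n)).val ↔ Odd i.val := by
    rw [← Nat.not_odd_iff_even, S.odd_pred hev i, not_not]
  have h1 : (if Even i.val then - S.k i else S.k i) * S.sgn (i - 1) = S.k i := by
    unfold sgn
    by_cases hodd : Odd i.val
    · rw [if_neg (fun he => (Nat.not_odd_iff_even.mpr he) hodd),
          if_neg (fun ho => ((S.odd_pred hev i).mp ho) hodd)]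
      ring
    · rw [if_pos (Nat.not_odd_iff_even.mp hodd), if_pos ((S.odd_pred hev i).mpr hodd)]
      ring
  have h2 : (if i = 0 then
        -(if Even ((i - 1 : ZMod S.n)).val then - S.k (i - 1) else S.k (i - 1))
      else (if Even ((i - 1 : ZMod S.n)).val then - S.k (i - 1) else S.k (i - 1))) *
      S.sgn i = S.kk i := by
    unfold sgn kk
    by_cases hodd : Odd i.val <;> by_cases hi0 : i = 0
    · rw [if_pos (hpar.mpr hodd), if_pos hi0, if_pos hodd, if_pos hi0]; ring
    · rw [if_pos (hpar.mpr hodd), if_neg hi0, if_pos hodd, if_neg hi0]; ring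
    · rw [if_neg (fun he => hodd (hpar.mp he)), if_pos hi0, if_neg hodd]; ring
    · rw [if_neg (fun he => hodd (hpar.mp he)), if_neg hi0, if_neg hodd]; ring
  rw [S.alphaII_g, S.aG_g, S.sB'_e hB'e (i - 1), S.sB'_e hB'e i, smul_smul, smul_smul, h1, h2]

end Bprime

end Section7

/-! #### Planar geometry of labels -/

section Planar

lemma cross_self (x : ℂ) : cross x x = 0 := by simp [cross]; ring

lemma cross_skew (x y : ℂ) : cross x y = - cross y x := by simp [cross]; ring

lemma cross_add_left (x y z : ℂ) : cross (x + y) z = cross x z + cross y z := by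
  simp [cross]; ring

lemma cross_add_right (x y z : ℂ) : cross x (y + z) = cross x y + cross x z := by
  simp [cross]; ring

lemma cross_smul_left (r : ℝ) (x z : ℂ) : cross (r • x) z = r * cross x z := by
  simp [cross, Complex.real_smul, Complex.mul_re, Complex.mul_im]; ring

lemma cross_smul_right (r : ℝ) (x z : ℂ) : cross x (r • z) = r * cross x z := by
  simp [cross, Complex.real_smul, Complex.mul_re, Complex.mul_im]; ring

lemma cross_neg_left (x z : ℂ) : cross (-x) z = - cross x z := by
  simp [cross]; ring

lemma cross_neg_right (x z : ℂ) : cross x (-z) = - cross x z := by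
  simp [cross]; ring

lemma toC_add (a b : Zm 2) : toC (a + b) = toC a + toC b := by
  simp [toC]; push_cast; ring

lemma toC_neg (a : Zm 2) : toC (-a) = - toC a := by
  simp [toC]; push_cast; ring

lemma toC_zsmul (z : ℤ) (a : Zm 2) : toC (z • a) = (z : ℝ) • toC a := by
  simp [toC, Complex.real_smul]; push_cast; ring

lemma toC_sub (a b : Zm 2) : toC (a - b) = toC a - toC b := by
  simp [toC]; push_cast; ring

lemma cross_toC (a b : Zm 2) :
    cross (toC a) (toC b) = ((a 0 * b 1 - a 1 * b 0 : ℤ) : ℝ) := by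
  simp [cross, toC]
  try push_cast
  try ring

lemma planar_decomp {A B : ℂ} (h : cross A B ≠ 0) (x : ℂ) :
    x = (cross x B / cross A B) • A + (cross A x / cross A B) • B := by
  have key : (cross A B) • x = (cross x B) • A + (cross A x) • B := by
    apply Complex.ext <;>
      simp [cross, Complex.real_smul, Complex.mul_re, Complex.mul_im] <;> ring
  have h2 := congrArg (fun w => (cross A B)⁻¹ • w) key
  simp only [smul_smul, inv_mul_cancel₀ h, one_smul, smul_add] at h2
  rw [div_eq_inv_mul, div_eq_inv_mul]
  exact h2

lemma interior_char (G : OrGraph) (α : G.E → Zm 2) (p : G.V)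
    (x y z : G.E) (hx : G.src x = p) (hy : G.src y = p) (hz : G.src z = p)
    (hxy : x ≠ y) (hxz : x ≠ z) (hyz : y ≠ z)
    (hall : ∀ w, G.src w = p → w = x ∨ w = y ∨ w = z)
    (u v : ℝ)
    (hcr : cross (toC (α x)) (toC (α y)) ≠ 0)
    (hzuv : toC (α z) = u • toC (α x) + v • toC (α y)) :
    InteriorVtx G α p ↔ (u < 0 ∧ v < 0) := by
  classical
  set A := toC (α x) with hA
  set Bv := toC (α y) with hB
  set C := toC (α z) with hC
  have hset : Finset.univ.filter (fun e : G.E => G.src e = p) = {x, y, z} := by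
    ext w
    simp only [Finset.mem_filter, Finset.mem_univ, true_and, Finset.mem_insert,
      Finset.mem_singleton]
    constructor
    · exact hall w
    · rintro (rfl | rfl | rfl) <;> assumption
  have hsum : ∀ c : G.E → ℝ,
      (∑ e ∈ Finset.univ.filter (fun e : G.E => G.src e = p), c e • toC (α e))
        = c x • A + c y • Bv + c z • C := by
    intro c
    rw [hset, Finset.sum_insert (by simp [hxy, hxz]),
        Finset.sum_insert (by simp [hyz]), Finset.sum_singleton]
    rw [add_assoc]
  constructor
  · intro hint
    constructor
    · obtain ⟨c, hc0, hrep⟩ := hint (-A)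
      rw [hsum c] at hrep
      have hcross := congrArg (fun w => cross w Bv) hrep
      simp only [hzuv, cross_add_left, cross_smul_left, cross_neg_left, cross_self,
        mul_zero, add_zero] at hcross
      have hkey : (1 + c x + c z * u) * cross A Bv = 0 := by
        linear_combination (-1 : ℝ) * hcross
      have h0 : 1 + c x + c z * u = 0 := by
        rcases mul_eq_zero.mp hkey with h | h
        · exact h
        · exact absurd h hcr
      by_contra hu
      push_neg at hu
      nlinarith [hc0 x, hc0 z, mul_nonneg (hc0 z) hu]
    · obtain ⟨c, hc0, hrep⟩ := hint (-Bv)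
      rw [hsum c] at hrep
      have hcross := congrArg (fun w => cross A w) hrep
      simp only [hzuv, cross_add_right, cross_smul_right, cross_neg_right, cross_self,
        mul_zero, zero_add, add_zero] at hcross
      have hkey : (1 + c y + c z * v) * cross A Bv = 0 := by
        linear_combination (-1 : ℝ) * hcross
      have h0 : 1 + c y + c z * v = 0 := by
        rcases mul_eq_zero.mp hkey with h | h
        · exact h
        · exact absurd h hcr
      by_contra hv
      push_neg at hv
      nlinarith [hc0 y, hc0 z, mul_nonneg (hc0 z) hv]
  · rintro ⟨hu, hv⟩ w
    set pc := cross w Bv / cross A Bv with hpc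
    set qc := cross A w / cross A Bv with hqc
    set r := max 0 (max (pc / u) (qc / v)) with hr
    have hr0 : 0 ≤ r := le_max_left _ _
    have hru : r * u ≤ pc := by
      have h1 : pc / u ≤ r := le_trans (le_max_left _ _) (le_max_right _ _)
      have h2 := mul_le_mul_of_nonpos_right h1 hu.le
      rwa [div_mul_cancel₀ pc hu.ne] at h2
    have hrv : r * v ≤ qc := by
      have h1 : qc / v ≤ r := le_trans (le_max_right _ _) (le_max_right _ _)
      have h2 := mul_le_mul_of_nonpos_right h1 hv.le
      rwa [div_mul_cancel₀ qc hv.ne] at h2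
    refine ⟨fun e => if e = x then pc - r * u else if e = y then qc - r * v
      else if e = z then r else 0, ?_, ?_⟩
    · intro e
      dsimp only
      by_cases h1 : e = x
      · rw [if_pos h1]; linarith
      rw [if_neg h1]
      by_cases h2 : e = y
      · rw [if_pos h2]; linarith
      rw [if_neg h2]
      by_cases h3 : e = z
      · rw [if_pos h3]; linarith
      rw [if_neg h3]
    · rw [hsum]
      rw [if_pos rfl, if_neg (Ne.symm hxy), if_pos rfl,
          if_neg (Ne.symm hxz), if_neg (Ne.symm hyz), if_pos rfl]
      rw [hzuv]
      have hdec := planar_decomp hcr w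
      rw [← hpc, ← hqc] at hdec
      rw [hdec]
      module

end Planar

namespace Section7

variable (S : Section7)


/-! #### Interior vertices -/

lemma cross_gamma_ne (i : ZMod S.n) :
    cross (toC (S.aB (S.e (i - 1)))) (toC (S.aB (S.e i))) ≠ 0 := by
  rw [cross_toC]
  rcases S.delzant i with h | h <;> rw [h] <;> norm_num

lemma cross_fp (i : ZMod S.n) :
    cross (toC (S.aG (S.f i))) (toC (S.aG (S.prevF i))) ≠ 0 := by
  rw [S.aG_f, S.aG_prevF, toC_neg, cross_neg_right, cross_skew]
  rw [neg_neg]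
  exact S.cross_gamma_ne i

lemma cross_hp (i : ZMod S.n) :
    cross (toC (S.aG (S.h i))) (toC (S.aG (S.prevH i))) ≠ 0 := by
  rw [S.aG_h, S.aG_prevH, toC_neg, cross_neg_right, cross_skew]
  rw [neg_neg]
  exact S.cross_gamma_ne i

lemma cross_fp_II (i : ZMod S.n) :
    cross (toC (S.alphaII (S.f i))) (toC (S.alphaII (S.prevF i))) ≠ 0 := by
  rw [S.alphaII_f, S.alphaII_prevF, toC_zsmul, toC_zsmul, cross_smul_left, cross_smul_right]
  have h1 := S.cross_fp i
  rcases S.sgn_cases i with hs | hs <;> rcases S.sgn_cases (i - 1) with hs' | hs' <;>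
    rw [hs, hs'] <;> push_cast <;> simpa using h1

lemma cross_hp_II (i : ZMod S.n) :
    cross (toC (S.alphaII (S.h i))) (toC (S.alphaII (S.prevH i))) ≠ 0 := by
  rw [S.alphaII_h, S.alphaII_prevH, toC_zsmul, toC_zsmul, cross_smul_left, cross_smul_right]
  have h1 := S.cross_hp i
  rcases S.sgn_cases i with hs | hs <;> rcases S.sgn_cases (i - 1) with hs' | hs' <;>
    rw [hs, hs'] <;> push_cast <;> simpa using h1

lemma f_ne_g (i : ZMod S.n) : S.f i ≠ S.g i :=
  fun h => S.f_horiz i (h ▸ S.g_vert i)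

lemma prevF_ne_g (i : ZMod S.n) : S.prevF i ≠ S.g i :=
  fun h => S.prevF_horiz i (h ▸ S.g_vert i)

lemma h_ne_revg (i : ZMod S.n) : S.h i ≠ S.G.rev (S.g i) :=
  fun hq => S.h_horiz i (hq ▸ ((S.π.vert_rev (S.g i)).mpr (S.g_vert i)))

lemma prevH_ne_revg (i : ZMod S.n) : S.prevH i ≠ S.G.rev (S.g i) :=
  fun hq => S.prevH_horiz i (hq ▸ ((S.π.vert_rev (S.g i)).mpr (S.g_vert i)))

lemma hall_f (i : ZMod S.n) : ∀ w, S.G.src w = S.G.src (S.f i) →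
    w = S.f i ∨ w = S.prevF i ∨ w = S.g i := by
  intro w hw
  rcases S.edges_at_f i w hw with h | h | h
  · exact Or.inl h
  · exact Or.inr (Or.inr h)
  · exact Or.inr (Or.inl h)

lemma hall_h (i : ZMod S.n) : ∀ w, S.G.src w = S.G.src (S.h i) →
    w = S.h i ∨ w = S.prevH i ∨ w = S.G.rev (S.g i) := by
  intro w hw
  rcases S.edges_at_h i w hw with h | h | h
  · exact Or.inl h
  · exact Or.inr (Or.inr h)
  · exact Or.inr (Or.inl h)

lemma int_aG_f (i : ZMod S.n) :
    InteriorVtx S.G S.aG (S.G.src (S.f i)) ↔ (0 < S.kk i ∧ 0 < S.k i) := by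
  rw [interior_char S.G S.aG _ (S.f i) (S.prevF i) (S.g i) rfl (S.src_prevF i) (S.g_src i)
      (S.f_ne_prevF i) (S.f_ne_g i) (S.prevF_ne_g i) (S.hall_f i)
      (-(S.kk i : ℝ)) (-(S.k i : ℝ)) (S.cross_fp i)
      (by
        rw [S.aG_g, S.aG_f, S.aG_prevF, toC_sub, toC_zsmul, toC_zsmul, toC_neg]
        module)]
  rw [neg_lt_zero, neg_lt_zero, Int.cast_pos, Int.cast_pos]

lemma int_aG_h (i : ZMod S.n) :
    InteriorVtx S.G S.aG (S.G.src (S.h i)) ↔ (S.kk i < 0 ∧ S.k i < 0) := by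
  rw [interior_char S.G S.aG _ (S.h i) (S.prevH i) (S.G.rev (S.g i)) rfl (S.src_prevH i)
      (by rw [S.G.src_rev, S.g_dst]) (S.h_ne_prevH i) (S.h_ne_revg i) (S.prevH_ne_revg i)
      (S.hall_h i)
      ((S.kk i : ℝ)) ((S.k i : ℝ)) (S.cross_hp i)
      (by
        rw [S.aG_rev, S.aG_g, S.aG_h, S.aG_prevH, toC_neg, toC_sub, toC_zsmul, toC_zsmul,
          toC_neg]
        module)]
  constructor
  · rintro ⟨h1, h2⟩
    exact ⟨by exact_mod_cast h1, by exact_mod_cast h2⟩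
  · rintro ⟨h1, h2⟩
    exact ⟨by exact_mod_cast h1, by exact_mod_cast h2⟩

lemma int_II_f (i : ZMod S.n) :
    InteriorVtx S.G S.alphaII (S.G.src (S.f i)) ↔
      (0 < S.sgn i * S.kk i ∧ 0 < S.sgn (i - 1) * S.k i) := by
  rw [interior_char S.G S.alphaII _ (S.f i) (S.prevF i) (S.g i) rfl (S.src_prevF i)
      (S.g_src i) (S.f_ne_prevF i) (S.f_ne_g i) (S.prevF_ne_g i) (S.hall_f i)
      (-((S.sgn i * S.kk i : ℤ) : ℝ)) (-((S.sgn (i - 1) * S.k i : ℤ) : ℝ)) (S.cross_fp_II i)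
      (by
        rw [S.alphaII_g, S.alphaII_f, S.alphaII_prevF, S.aG_g, S.aG_f, S.aG_prevF,
          toC_sub, toC_zsmul, toC_zsmul, toC_zsmul, toC_zsmul, toC_neg]
        rcases S.sgn_cases i with hs | hs <;> rcases S.sgn_cases (i - 1) with hs' | hs' <;>
          rw [hs, hs'] <;> push_cast <;> module)]
  rw [neg_lt_zero, neg_lt_zero, Int.cast_pos, Int.cast_pos]

lemma int_II_h (i : ZMod S.n) :
    InteriorVtx S.G S.alphaII (S.G.src (S.h i)) ↔
      (S.sgn i * S.kk i < 0 ∧ S.sgn (i - 1) * S.k i < 0) := by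
  rw [interior_char S.G S.alphaII _ (S.h i) (S.prevH i) (S.G.rev (S.g i)) rfl (S.src_prevH i)
      (by rw [S.G.src_rev, S.g_dst]) (S.h_ne_prevH i) (S.h_ne_revg i) (S.prevH_ne_revg i)
      (S.hall_h i)
      (((S.sgn i * S.kk i : ℤ) : ℝ)) (((S.sgn (i - 1) * S.k i : ℤ) : ℝ)) (S.cross_hp_II i)
      (by
        rw [S.alphaII_revg, S.alphaII_h, S.alphaII_prevH, S.aG_g, S.aG_h, S.aG_prevH,
          toC_neg, toC_sub, toC_zsmul, toC_zsmul, toC_zsmul, toC_zsmul, toC_neg]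
        rcases S.sgn_cases i with hs | hs <;> rcases S.sgn_cases (i - 1) with hs' | hs' <;>
          rw [hs, hs'] <;> push_cast <;> module)]
  constructor
  · rintro ⟨h1, h2⟩
    exact ⟨by exact_mod_cast h1, by exact_mod_cast h2⟩
  · rintro ⟨h1, h2⟩
    exact ⟨by exact_mod_cast h1, by exact_mod_cast h2⟩

/-! #### Counting interior vertices -/

noncomputable def idx (p : S.G.V) : ZMod S.n :=
  (Equiv.ofBijective S.v S.v_bij).symm (S.π.onV p)

lemma idx_f (i : ZMod S.n) : S.idx (S.G.src (S.f i)) = i := by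
  unfold idx
  rw [S.onV_src_f]
  exact (Equiv.ofBijective S.v S.v_bij).symm_apply_apply i

lemma idx_h (i : ZMod S.n) : S.idx (S.G.src (S.h i)) = i := by
  unfold idx
  rw [S.onV_src_h]
  exact (Equiv.ofBijective S.v S.v_bij).symm_apply_apply i

lemma int_cases_aG {p : S.G.V} (hp : InteriorVtx S.G S.aG p) :
    ∃ i : ZMod S.n, S.idx p = i ∧
      ((p = S.G.src (S.f i) ∧ 0 < S.kk i ∧ 0 < S.k i) ∨
       (p = S.G.src (S.h i) ∧ S.kk i < 0 ∧ S.k i < 0)) := by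
  obtain ⟨i, hi | hi⟩ := S.vtx_classify p
  · subst hi
    exact ⟨i, S.idx_f i, Or.inl ⟨rfl, (S.int_aG_f i).mp hp⟩⟩
  · subst hi
    exact ⟨i, S.idx_h i, Or.inr ⟨rfl, (S.int_aG_h i).mp hp⟩⟩

lemma int_cases_II {p : S.G.V} (hp : InteriorVtx S.G S.alphaII p) :
    ∃ i : ZMod S.n, S.idx p = i ∧
      ((p = S.G.src (S.f i) ∧ 0 < S.sgn i * S.kk i ∧ 0 < S.sgn (i - 1) * S.k i) ∨
       (p = S.G.src (S.h i) ∧ S.sgn i * S.kk i < 0 ∧ S.sgn (i - 1) * S.k i < 0)) := by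
  obtain ⟨i, hi | hi⟩ := S.vtx_classify p
  · subst hi
    exact ⟨i, S.idx_f i, Or.inl ⟨rfl, (S.int_II_f i).mp hp⟩⟩
  · subst hi
    exact ⟨i, S.idx_h i, Or.inr ⟨rfl, (S.int_II_h i).mp hp⟩⟩

lemma part5 (hev : Even S.n) :
    Nat.card {p : S.G.V // InteriorVtx S.G S.alphaII p} = 1 := by
  classical
  set Ψ : {p : S.G.V // InteriorVtx S.G S.aG p} ⊕ {p : S.G.V // InteriorVtx S.G S.alphaII p}
      → ZMod S.n := fun s => S.idx (Sum.elim Subtype.val Subtype.val s) with hΨ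
  have hinj : Function.Injective Ψ := by
    rintro (⟨p, hp⟩ | ⟨p, hp⟩) (⟨q, hq⟩ | ⟨q, hq⟩) hst
    · obtain ⟨i, hpi, hpc⟩ := S.int_cases_aG hp
      obtain ⟨j, hqj, hqc⟩ := S.int_cases_aG hq
      simp only [hΨ, Sum.elim_inl, Sum.elim_inr] at hst
      rw [hpi, hqj] at hst
      subst hst
      rcases hpc with ⟨hpe, hc1⟩ | ⟨hpe, hc1⟩ <;> rcases hqc with ⟨hqe, hc2⟩ | ⟨hqe, hc2⟩
      · rw [Sum.inl.injEq, Subtype.mk.injEq]; rw [hpe, hqe]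
      · omega
      · omega
      · rw [Sum.inl.injEq, Subtype.mk.injEq]; rw [hpe, hqe]
    · obtain ⟨i, hpi, hpc⟩ := S.int_cases_aG hp
      obtain ⟨j, hqj, hqc⟩ := S.int_cases_II hq
      simp only [hΨ, Sum.elim_inl, Sum.elim_inr] at hst
      rw [hpi, hqj] at hst
      subst hst
      exfalso
      have hsp := S.sgn_pred hev i
      rcases hpc with ⟨hpe, hc1⟩ | ⟨hpe, hc1⟩ <;> rcases hqc with ⟨hqe, hc2⟩ | ⟨hqe, hc2⟩ <;>
        rw [hsp] at hc2 <;>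
        rcases S.sgn_cases i with hs | hs <;> rw [hs] at hc2 <;> omega
    · obtain ⟨i, hpi, hpc⟩ := S.int_cases_II hp
      obtain ⟨j, hqj, hqc⟩ := S.int_cases_aG hq
      simp only [hΨ, Sum.elim_inl, Sum.elim_inr] at hst
      rw [hpi, hqj] at hst
      subst hst
      exfalso
      have hsp := S.sgn_pred hev i
      rcases hpc with ⟨hpe, hc1⟩ | ⟨hpe, hc1⟩ <;> rcases hqc with ⟨hqe, hc2⟩ | ⟨hqe, hc2⟩ <;>
        rw [hsp] at hc1 <;>
        rcases S.sgn_cases i with hs | hs <;> rw [hs] at hc1 <;> omega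
    · obtain ⟨i, hpi, hpc⟩ := S.int_cases_II hp
      obtain ⟨j, hqj, hqc⟩ := S.int_cases_II hq
      simp only [hΨ, Sum.elim_inl, Sum.elim_inr] at hst
      rw [hpi, hqj] at hst
      subst hst
      have hsp := S.sgn_pred hev i
      rcases hpc with ⟨hpe, hc1⟩ | ⟨hpe, hc1⟩ <;> rcases hqc with ⟨hqe, hc2⟩ | ⟨hqe, hc2⟩
      · rw [Sum.inr.injEq, Subtype.mk.injEq]; rw [hpe, hqe]
      · exfalso
        rw [hsp] at hc1 hc2
        rcases S.sgn_cases i with hs | hs <;> rw [hs] at hc1 hc2 <;> omega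
      · exfalso
        rw [hsp] at hc1 hc2
        rcases S.sgn_cases i with hs | hs <;> rw [hs] at hc1 hc2 <;> omega
      · rw [Sum.inr.injEq, Subtype.mk.injEq]; rw [hpe, hqe]
  have hsurj : Function.Surjective Ψ := by
    intro i
    have ha := S.kk_ne i
    have hb := S.k_ne i
    have hsp := S.sgn_pred hev i
    rcases S.sgn_cases i with hs | hs <;>
      rcases lt_or_gt_of_ne ha with ha' | ha' <;> rcases lt_or_gt_of_ne hb with hb' | hb'
    · refine ⟨Sum.inl ⟨S.G.src (S.h i), (S.int_aG_h i).mpr ⟨ha', hb'⟩⟩, ?_⟩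
      simp only [hΨ, Sum.elim_inl]
      exact S.idx_h i
    · refine ⟨Sum.inr ⟨S.G.src (S.h i), (S.int_II_h i).mpr
        ⟨by rw [hs]; omega, by rw [hsp, hs]; omega⟩⟩, ?_⟩
      simp only [hΨ, Sum.elim_inr]
      exact S.idx_h i
    · refine ⟨Sum.inr ⟨S.G.src (S.f i), (S.int_II_f i).mpr
        ⟨by rw [hs]; omega, by rw [hsp, hs]; omega⟩⟩, ?_⟩
      simp only [hΨ, Sum.elim_inr]
      exact S.idx_f i
    · refine ⟨Sum.inl ⟨S.G.src (S.f i), (S.int_aG_f i).mpr ⟨ha', hb'⟩⟩, ?_⟩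
      simp only [hΨ, Sum.elim_inl]
      exact S.idx_f i
    · refine ⟨Sum.inl ⟨S.G.src (S.h i), (S.int_aG_h i).mpr ⟨ha', hb'⟩⟩, ?_⟩
      simp only [hΨ, Sum.elim_inl]
      exact S.idx_h i
    · refine ⟨Sum.inr ⟨S.G.src (S.f i), (S.int_II_f i).mpr
        ⟨by rw [hs]; omega, by rw [hsp, hs]; omega⟩⟩, ?_⟩
      simp only [hΨ, Sum.elim_inr]
      exact S.idx_f i
    · refine ⟨Sum.inr ⟨S.G.src (S.h i), (S.int_II_h i).mpr
        ⟨by rw [hs]; omega, by rw [hsp, hs]; omega⟩⟩, ?_⟩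
      simp only [hΨ, Sum.elim_inr]
      exact S.idx_h i
    · refine ⟨Sum.inl ⟨S.G.src (S.f i), (S.int_aG_f i).mpr ⟨ha', hb'⟩⟩, ?_⟩
      simp only [hΨ, Sum.elim_inl]
      exact S.idx_f i
  have hcard := Nat.card_eq_of_bijective Ψ ⟨hinj, hsurj⟩
  rw [Nat.card_sum, Nat.card_zmod] at hcard
  have hic := S.interior_count
  have hn3 := S.hn
  omega

end Section7
/-- in the Section 7 setting with `n` even, flipping the signs of the
base weights of every second edge gives a signed structure `B'`, and the type II
structure `Γ'` fibers over `B'` as a signed GKM fibration, corresponding to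
`(-k_1, k_2, …, -k_{n-1}, k_n)` under the classification; in particular `Γ'` has
exactly one interior vertex. -/
theorem statement11 (S : Section7) (heven : Even S.n)
    (sB' : S.B.E → Zm 2)
    (hB'e : ∀ i : ZMod S.n, sB' (S.e i) =
      (if Odd i.val then - S.aB (S.e i) else S.aB (S.e i)))
    (hB'rev : ∀ ed, sB' (S.B.rev ed) = - sB' ed) :
    IsSignedGKM S.B 2 sB' ∧
    IsSignedGKM S.G 3 S.alphaII ∧
    IsSignedGKMFib S.alphaII sB' S.π ∧
    (∀ i : ZMod S.n, S.alphaII (S.g i) =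
      (if Even i.val then - S.k i else S.k i) • sB' (S.e (i - 1)) -
      (if i = 0 then - (if Even (i - 1 : ZMod S.n).val then - S.k (i - 1) else S.k (i - 1))
        else (if Even (i - 1 : ZMod S.n).val then - S.k (i - 1) else S.k (i - 1))) • sB' (S.e i)) ∧
    Nat.card {p : S.G.V // InteriorVtx S.G S.alphaII p} = 1 := by
  exact ⟨S.partB' hB'e hB'rev heven, ⟨S.hG.1, S.hG.2.1, S.CII, S.compatII heven⟩,
    S.part3 hB'e hB'rev heven, S.part4 hB'e hB'rev heven, S.part5 heven⟩

end GKMPaper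
end

section
/- If (γ_1,…,γ_n) is a locally convex sequence of nonzero vectors in ℝ² with preferred orientation ε and n is even, then the winding numbers satisfy σ(γ_1,γ_3,…,γ_{n−1},ε) = σ(γ_1,γ_2,…,γ_n,ε). -/
open Classical

namespace GKMPaper

lemma angTo_coe (ε : Bool) (w w' : ℂ) :
    ((angTo ε w w' : ℝ) : Real.Angle) = (((w' / w).arg : ℝ) : Real.Angle) := by
  unfold angTo
  cases ε <;> simp only [if_true, if_false, Bool.false_eq_true, ite_false, ite_true] <;>
    split_ifs <;>
    simp [Real.Angle.coe_add, Real.Angle.coe_sub, Real.Angle.coe_two_pi, sub_eq_add_neg]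

lemma angTo_mem_true (w w' : ℂ) : angTo true w w' ∈ Set.Ico 0 (2 * Real.pi) := by
  have h1 := Complex.arg_le_pi (w' / w)
  have h2 := Complex.neg_pi_lt_arg (w' / w)
  have hπ := Real.pi_pos
  unfold angTo
  simp only [if_true, ite_true]
  split_ifs with h <;> constructor <;> first | linarith | push_neg at h <;> linarith

lemma angTo_mem_false (w w' : ℂ) : angTo false w w' ∈ Set.Ioc (-(2 * Real.pi)) 0 := by
  have h1 := Complex.arg_le_pi (w' / w)
  have h2 := Complex.neg_pi_lt_arg (w' / w)
  have hπ := Real.pi_pos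
  unfold angTo
  simp only [Bool.false_eq_true, if_false, ite_false]
  split_ifs with h <;> constructor <;> first | linarith | push_neg at h <;> linarith

lemma real_eq_of_angle_eq {x y : ℝ} (h : (x : Real.Angle) = (y : Real.Angle))
    (hb : |x - y| < 2 * Real.pi) : x = y := by
  obtain ⟨k, hk⟩ := Real.Angle.angle_eq_iff_two_pi_dvd_sub.mp h
  have hπ := Real.pi_pos
  have hk0 : k = 0 := by
    by_contra h0
    have h1 : (1 : ℝ) ≤ |(k : ℝ)| := by exact_mod_cast Int.one_le_abs h0
    rw [hk, abs_mul] at hb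
    have h2 : |2 * Real.pi| = 2 * Real.pi := abs_of_pos (by linarith)
    nlinarith
  rw [hk0] at hk
  push_cast at hk
  linarith

lemma angTo_add_true {z₁ z₂ z₃ : ℂ} (h1 : z₁ ≠ 0) (h2 : z₂ ≠ 0) (h3 : z₃ ≠ 0)
    (ha : angTo true z₁ z₂ ∈ Set.Ioo 0 Real.pi)
    (hb : angTo true z₂ z₃ ∈ Set.Ioo 0 Real.pi) :
    angTo true z₁ z₃ = angTo true z₁ z₂ + angTo true z₂ z₃ := by
  have hπ := Real.pi_pos
  obtain ⟨hm1, hm2⟩ := angTo_mem_true z₁ z₃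
  apply real_eq_of_angle_eq
  · rw [Real.Angle.coe_add, angTo_coe, angTo_coe, angTo_coe]
    have hmul : z₂ / z₁ * (z₃ / z₂) = z₃ / z₁ := by field_simp
    rw [← hmul, Complex.arg_mul_coe_angle (div_ne_zero h2 h1) (div_ne_zero h3 h2)]
  · rw [abs_sub_lt_iff]
    constructor
    · linarith [ha.1, hb.1]
    · linarith [ha.2, hb.2]

lemma angTo_add_false {z₁ z₂ z₃ : ℂ} (h1 : z₁ ≠ 0) (h2 : z₂ ≠ 0) (h3 : z₃ ≠ 0)
    (ha : angTo false z₁ z₂ ∈ Set.Ioo (-Real.pi) 0)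
    (hb : angTo false z₂ z₃ ∈ Set.Ioo (-Real.pi) 0) :
    angTo false z₁ z₃ = angTo false z₁ z₂ + angTo false z₂ z₃ := by
  have hπ := Real.pi_pos
  obtain ⟨hm1, hm2⟩ := angTo_mem_false z₁ z₃
  apply real_eq_of_angle_eq
  · rw [Real.Angle.coe_add, angTo_coe, angTo_coe, angTo_coe]
    have hmul : z₂ / z₁ * (z₃ / z₂) = z₃ / z₁ := by field_simp
    rw [← hmul, Complex.arg_mul_coe_angle (div_ne_zero h2 h1) (div_ne_zero h3 h2)]
  · rw [abs_sub_lt_iff]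
    constructor
    · linarith [ha.1, hb.1]
    · linarith [ha.2, hb.2, hm1]

lemma sum_zmod {nn : ℕ} [NeZero nn] (F : ZMod nn → ℝ) :
    ∑ i : ZMod nn, F i = ∑ i ∈ Finset.range nn, F (i : ZMod nn) := by
  apply Finset.sum_nbij' (fun (i : ZMod nn) => i.val) (fun j => (j : ZMod nn))
  · intro a _; exact Finset.mem_range.mpr (ZMod.val_lt a)
  · intro a _; exact Finset.mem_univ _
  · intro a _; exact ZMod.natCast_rightInverse a
  · intro a ha; exact ZMod.val_cast_of_lt (Finset.mem_range.mp ha)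
  · intro a _; rw [ZMod.natCast_rightInverse a]

lemma sum_range_even_odd (F : ℕ → ℝ) (m : ℕ) :
    ∑ i ∈ Finset.range (2 * m), F i = ∑ j ∈ Finset.range m, (F (2 * j) + F (2 * j + 1)) := by
  induction m with
  | zero => simp
  | succ m ih =>
    have h2 : 2 * (m + 1) = 2 * m + 1 + 1 := by ring
    rw [h2, Finset.sum_range_succ, Finset.sum_range_succ, Finset.sum_range_succ, ih]
    ring

lemma cast_succ_key (mh : ℕ) [NeZero mh] (j : ZMod mh) :
    ((2 * (j + 1).val : ℕ) : ZMod (2 * mh)) =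
      ((2 * j.val : ℕ) : ZMod (2 * mh)) + 1 + 1 := by
  have h1 : (((j + 1).val : ℕ) : ZMod mh) = ((j.val + 1 : ℕ) : ZMod mh) := by
    rw [ZMod.natCast_rightInverse (j + 1)]
    push_cast
    rw [ZMod.natCast_rightInverse j]
  have h2 : ((j + 1).val : ℕ) ≡ j.val + 1 [MOD mh] :=
    (ZMod.natCast_eq_natCast_iff _ _ _).mp h1
  have h3 : 2 * (j + 1).val ≡ 2 * (j.val + 1) [MOD 2 * mh] := h2.mul_left' 2
  have h4 : ((2 * (j + 1).val : ℕ) : ZMod (2 * mh)) =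
      ((2 * (j.val + 1) : ℕ) : ZMod (2 * mh)) :=
    (ZMod.natCast_eq_natCast_iff _ _ _).mpr h3
  rw [h4]
  push_cast
  ring


/-- for a locally convex sequence of even length with preferred
orientation `ε`, the winding number of the subsequence of odd-position entries
equals that of the full sequence. -/
theorem statement13 (mh : ℕ) [NeZero mh] [NeZero (2 * mh)]
    (w : ZMod (2 * mh) → ℂ) (hw : ∀ i, w i ≠ 0)
    (ε : Bool) (hpref : Preferred w ε) :
    winding (fun j : ZMod mh => w (((2 * j.val : ℕ) : ZMod (2 * mh)))) ε =
      winding w ε := by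
  have hπ := Real.pi_pos
  set F : ZMod (2 * mh) → ℝ := fun i => |angTo ε (w i) (w (i + 1))| with hF
  have hstep : ∀ j : ZMod mh,
      |angTo ε (w (((2 * j.val : ℕ) : ZMod (2 * mh))))
        (w (((2 * (j + 1).val : ℕ) : ZMod (2 * mh))))|
        = F (((2 * j.val : ℕ) : ZMod (2 * mh)))
          + F ((((2 * j.val : ℕ) : ZMod (2 * mh))) + 1) := by
    intro j
    set a : ZMod (2 * mh) := ((2 * j.val : ℕ) : ZMod (2 * mh)) with ha
    rw [cast_succ_key mh j]
    simp only [hF]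
    rcases hpref with ⟨hε, hloc⟩ | ⟨hε, hloc⟩ <;> subst hε
    · have h1 := hloc a
      have h2 := hloc (a + 1)
      rw [angTo_add_true (hw a) (hw (a + 1)) (hw (a + 1 + 1)) h1 h2]
      rw [abs_of_pos (by linarith [h1.1, h2.1]), abs_of_pos h1.1, abs_of_pos h2.1]
    · have h1 := hloc a
      have h2 := hloc (a + 1)
      rw [angTo_add_false (hw a) (hw (a + 1)) (hw (a + 1 + 1)) h1 h2]
      rw [abs_of_neg (by linarith [h1.2, h2.2]), abs_of_neg h1.2, abs_of_neg h2.2]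
      ring
  unfold winding
  congr 1
  calc ∑ j : ZMod mh, |angTo ε (w (((2 * j.val : ℕ) : ZMod (2 * mh))))
          (w (((2 * (j + 1).val : ℕ) : ZMod (2 * mh))))|
      = ∑ j : ZMod mh, (F (((2 * j.val : ℕ) : ZMod (2 * mh)))
          + F ((((2 * j.val : ℕ) : ZMod (2 * mh))) + 1)) :=
        Finset.sum_congr rfl (fun j _ => hstep j)
    _ = ∑ j ∈ Finset.range mh, (F (((2 * j : ℕ) : ZMod (2 * mh)))
          + F ((((2 * j : ℕ) : ZMod (2 * mh))) + 1)) := by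
        rw [sum_zmod]
        refine Finset.sum_congr rfl fun j hj => ?_
        rw [ZMod.val_cast_of_lt (Finset.mem_range.mp hj)]
    _ = ∑ i ∈ Finset.range (2 * mh), F ((i : ℕ) : ZMod (2 * mh)) := by
        rw [sum_range_even_odd (fun i => F ((i : ℕ) : ZMod (2 * mh))) mh]
        refine Finset.sum_congr rfl fun j _ => ?_
        have hcast : ((2 * j + 1 : ℕ) : ZMod (2 * mh)) =
            ((2 * j : ℕ) : ZMod (2 * mh)) + 1 := by push_cast; ring
        rw [hcast]
    _ = ∑ i : ZMod (2 * mh), F i := (sum_zmod F).symm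

end GKMPaper
end
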